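/- arXiv:0906.2998 — 3 statements merged into one kernel-verified Lean document; each statement's English description precedes it below -/
import Mathlib

section
/- There exists a constant C such that for all ε ∈ (0,1], sup_{y∈ℝⁿ} ∫_K |y − x(x₀)|^k e^{−a|y − x(x₀)|²/ε} dx₀ ≤ C ε^{(k+1)/2}. -/
/- STATEMENT 2:
Let K ⊂ ℝⁿ be compact, U ⊇ K open, x : U → ℝⁿ a C¹ map whose Jacobian matrix is nonzero at
every point of K, a > 0, k ≥ 0 an integer.  Then there is a constant C such that for all
ε ∈ (0,1],  sup_{y∈ℝⁿ} ∫_K |y − x(x₀)|^k e^{−a|y − x(x₀)|²/ε} dx₀ ≤ C ε^{(k+1)/2}. -/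

noncomputable section

open MeasureTheory Set

abbrev Eu (n : ℕ) := EuclideanSpace ℝ (Fin n)


lemma aux_pow_exp (c : ℝ) (hc : 0 < c) (k : ℕ) :
    ∀ t : ℝ, 0 ≤ t → t ^ k * Real.exp (-c * t ^ 2) ≤ Real.exp (k ^ 2 / (4 * c)) := by
  intro t ht
  have h1 : t ^ k ≤ Real.exp (k * t) := by
    calc t ^ k ≤ Real.exp t ^ k := by
          exact pow_le_pow_left₀ ht (le_trans (by linarith) (Real.add_one_le_exp t)) k
      _ = Real.exp (k * t) := by rw [← Real.exp_nat_mul]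
  calc t ^ k * Real.exp (-c * t ^ 2) ≤ Real.exp (k * t) * Real.exp (-c * t ^ 2) := by
        apply mul_le_mul_of_nonneg_right h1 (Real.exp_nonneg _)
    _ = Real.exp (k * t - c * t ^ 2) := by rw [← Real.exp_add]; ring_nf
    _ ≤ Real.exp (k ^ 2 / (4 * c)) := by
        apply Real.exp_le_exp.2
        rw [le_div_iff₀ (by positivity)]
        nlinarith [sq_nonneg (2 * c * t - k)]

lemma aux_series (b : ℝ) (hb : 0 < b) (j : ℕ) :
    (j + 1 : ℝ) * Real.exp (-b * j ^ 2) ≤ (1 + 2 / b) * Real.exp (-(b / 2)) ^ j := by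
  have hexp : Real.exp (-(b/2)) ^ j = Real.exp (-(b/2) * j) := by
    rw [← Real.exp_nat_mul]; ring_nf
  rw [hexp]
  have h2 : Real.exp (-b * j ^ 2) ≤ Real.exp (-b * j) := by
    apply Real.exp_le_exp.2
    have hjj : (j:ℝ) ≤ (j:ℝ) ^ 2 := by exact_mod_cast Nat.le_self_pow two_ne_zero j
    nlinarith
  have h3 : (j + 1 : ℝ) * Real.exp (-b * j) ≤ (1 + 2 / b) * Real.exp (-(b / 2) * j) := by
    have e1 : Real.exp (-b * (j:ℝ)) = Real.exp (-(b/2) * j) * Real.exp (-(b/2) * j) := by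
      rw [← Real.exp_add]; ring_nf
    rw [e1, ← mul_assoc]
    apply mul_le_mul_of_nonneg_right _ (Real.exp_nonneg _)
    -- (j+1) * exp(-(b/2) j) ≤ 1 + 2/b
    have hj : (b / 2) * j ≤ Real.exp ((b/2) * j) := le_trans (by linarith [mul_nonneg (by linarith : (0:ℝ) ≤ b/2) (Nat.cast_nonneg (α := ℝ) j)]) (Real.add_one_le_exp _)
    have hpos : (0:ℝ) < Real.exp ((b/2) * j) := Real.exp_pos _
    have hinv : Real.exp (-(b/2) * j) = (Real.exp ((b/2) * j))⁻¹ := by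
      rw [← Real.exp_neg]; ring_nf
    rw [hinv]
    rw [mul_inv_le_iff₀ hpos]
    have h1e : (1:ℝ) ≤ Real.exp ((b/2)*j) := Real.one_le_exp (by positivity)
    have : (j:ℝ) ≤ (2/b) * Real.exp ((b/2)*j) := by
      have := mul_le_mul_of_nonneg_left hj (by positivity : (0:ℝ) ≤ 2/b)
      calc (j:ℝ) = (2/b) * ((b/2) * j) := by field_simp
        _ ≤ (2/b) * Real.exp ((b/2)*j) := this
    nlinarith
  calc (j + 1 : ℝ) * Real.exp (-b * j ^ 2) ≤ (j + 1 : ℝ) * Real.exp (-b * j) :=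
        mul_le_mul_of_nonneg_left h2 (by positivity)
    _ ≤ _ := h3

lemma coord_le_norm {n : ℕ} (v : Eu n) (i : Fin n) : |v i| ≤ ‖v‖ := by
  rw [EuclideanSpace.norm_eq]
  have : |v i| = Real.sqrt (|v i| ^ 2) := by
    rw [Real.sqrt_sq_eq_abs, abs_abs]
  rw [this]
  apply Real.sqrt_le_sqrt
  have : |v i| ^ 2 = ‖v i‖ ^ 2 := by rw [Real.norm_eq_abs]
  rw [this]
  exact Finset.single_le_sum (f := fun i => ‖v i‖ ^ 2) (fun _ _ => by positivity) (Finset.mem_univ i)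

lemma slab_volume {n : ℕ} (hn : 1 ≤ n) (L : Eu n →L[ℝ] ℝ) (hL : L ≠ 0)
    (z₀ : Eu n) (R : ℝ) (l r : ℝ) :
    volume ({z : Eu n | L z ∈ Ioo l r} ∩ Metric.ball z₀ R) ≤
      ENNReal.ofReal ((r - l) / ‖L‖) * ENNReal.ofReal (2 * R) ^ (n - 1) := by
  have hLn : 0 < ‖L‖ := norm_pos_iff.2 hL
  set w : Eu n := (InnerProductSpace.toDual ℝ (Eu n)).symm L with hw_def
  have hwL : ∀ z : Eu n, (inner ℝ w z : ℝ) = L z := fun z => InnerProductSpace.toDual_symm_apply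
  have hww : ‖w‖ = ‖L‖ := LinearIsometryEquiv.norm_map _ L
  have hwn : 0 < ‖w‖ := hww ▸ hLn
  set e : Eu n := ‖w‖⁻¹ • w with he_def
  have hee : (inner ℝ e e : ℝ) = 1 := by
    rw [he_def, real_inner_smul_left, real_inner_smul_right, real_inner_self_eq_norm_sq]
    field_simp
  have horth : Orthonormal ℝ (({⟨0, hn⟩} : Set (Fin n)).restrict (fun _ => e)) := by
    rw [orthonormal_iff_ite]
    intro i j
    have hij : i = j := Subtype.ext (by
      have hi := i.2; have hj := j.2
      simp only [Set.mem_singleton_iff] at hi hj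
      rw [hi, hj])
    have he1 : ‖e‖ = 1 := by rw [he_def, norm_smul, norm_inv, norm_norm, inv_mul_cancel₀ hwn.ne']
    simp [hij]
    exact Or.inl he1
  obtain ⟨b, hb⟩ := horth.exists_orthonormalBasis_extension_of_card_eq
    (by simp [finrank_euclideanSpace_fin]) (v := fun _ => e)
  set i₀ : Fin n := ⟨0, hn⟩ with hi₀
  have hbi : b i₀ = e := hb i₀ rfl
  have hrepr : ∀ z : Eu n, b.repr z i₀ = L z / ‖L‖ := by
    intro z
    rw [b.repr_apply_apply, hbi, he_def, real_inner_smul_left, hwL, hww]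
    ring
  set T : Set (Eu n) := WithLp.ofLp ⁻¹' Set.pi Set.univ (fun i : Fin n =>
    if i = i₀ then Ioo (l / ‖L‖) (r / ‖L‖) else Ioo (b.repr z₀ i - R) (b.repr z₀ i + R)) with hT
  have hTmeas : MeasurableSet T :=
    (MeasurableSet.univ_pi (fun i => by split <;> exact measurableSet_Ioo)).preimage
      (MeasurableEquiv.toLp 2 (Fin n → ℝ)).symm.measurable
  have hsub : {z : Eu n | L z ∈ Ioo l r} ∩ Metric.ball z₀ R ⊆ b.repr ⁻¹' T := by
    rintro z ⟨hz1, hz2⟩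
    intro i _
    by_cases hi : i = i₀
    · subst hi
      simp only [if_pos rfl]
      rw [hrepr z]
      obtain ⟨h1, h2⟩ := hz1
      exact ⟨by gcongr, by gcongr⟩
    · simp only [if_neg hi]
      have hsub : b.repr z i - b.repr z₀ i = b.repr (z - z₀) i := by
        rw [map_sub]; rfl
      have habs : |b.repr z i - b.repr z₀ i| < R := by
        rw [hsub]
        calc |b.repr (z - z₀) i| ≤ ‖b.repr (z - z₀)‖ := coord_le_norm _ _
          _ = ‖z - z₀‖ := LinearIsometryEquiv.norm_map _ _
          _ < R := by rw [← dist_eq_norm]; exact Metric.mem_ball.1 hz2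
      rw [abs_lt] at habs
      exact ⟨by linarith [habs.1], by linarith [habs.2]⟩
  calc volume ({z : Eu n | L z ∈ Ioo l r} ∩ Metric.ball z₀ R)
      ≤ volume (b.repr ⁻¹' T) := measure_mono hsub
    _ = volume T := b.measurePreserving_repr.measure_preimage hTmeas.nullMeasurableSet
    _ = volume ((MeasurableEquiv.toLp 2 (Fin n → ℝ)).symm ⁻¹'
          (Set.pi Set.univ (fun i : Fin n =>
            if i = i₀ then Ioo (l / ‖L‖) (r / ‖L‖)
            else Ioo (b.repr z₀ i - R) (b.repr z₀ i + R)))) := rfl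
    _ = volume (Set.pi Set.univ (fun i : Fin n =>
            if i = i₀ then Ioo (l / ‖L‖) (r / ‖L‖)
            else Ioo (b.repr z₀ i - R) (b.repr z₀ i + R))) :=
        (EuclideanSpace.volume_preserving_symm_measurableEquiv_toLp (Fin n)).measure_preimage
          (MeasurableSet.univ_pi (fun i => by split <;> exact measurableSet_Ioo)).nullMeasurableSet
    _ = ∏ i : Fin n, volume (if i = i₀ then Ioo (l / ‖L‖) (r / ‖L‖)
            else Ioo (b.repr z₀ i - R) (b.repr z₀ i + R)) := volume_pi_pi _
    _ ≤ ENNReal.ofReal ((r - l) / ‖L‖) * ENNReal.ofReal (2 * R) ^ (n - 1) := by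
        rw [← Finset.mul_prod_erase Finset.univ _ (Finset.mem_univ i₀)]
        apply mul_le_mul'
        · rw [if_pos rfl, Real.volume_Ioo]
          apply le_of_eq; congr 1; field_simp
        · apply le_of_eq
          calc ∏ i ∈ Finset.univ.erase i₀, volume (if i = i₀ then Ioo (l / ‖L‖) (r / ‖L‖)
                else Ioo (b.repr z₀ i - R) (b.repr z₀ i + R))
              = ∏ i ∈ Finset.univ.erase i₀, ENNReal.ofReal (2 * R) := by
                  apply Finset.prod_congr rfl
                  intro i hi
                  rw [if_neg (Finset.ne_of_mem_erase hi), Real.volume_Ioo]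
                  congr 1; ring
            _ = ENNReal.ofReal (2 * R) ^ (n - 1) := by
                  rw [Finset.prod_const, Finset.card_erase_of_mem (Finset.mem_univ i₀),
                    Finset.card_univ, Fintype.card_fin]

open ENNReal in
lemma core_measure {n : ℕ} (hn : 1 ≤ n) {U : Set (Eu n)} (hU : IsOpen U)
    (u : Eu n → ℝ) (hu : ContDiffOn ℝ 1 u U) {p : Eu n} (hp : p ∈ U)
    (hL : fderiv ℝ u p ≠ 0) :
    ∃ V : Set (Eu n), IsOpen V ∧ p ∈ V ∧ V ⊆ U ∧ ∃ c : ℝ≥0∞, c ≠ ⊤ ∧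
      ∀ l r : ℝ, volume (V ∩ u ⁻¹' (Ioo l r)) ≤ c * ENNReal.ofReal (r - l) := by
  classical
  set L : Eu n →L[ℝ] ℝ := fderiv ℝ u p with hLdef
  obtain ⟨h₀, hh₀⟩ : ∃ h₀, L h₀ ≠ 0 := by
    by_contra hcon
    push_neg at hcon
    exact hL (ContinuousLinearMap.ext fun z => by simp [hcon z])
  set v : Eu n := (L h₀)⁻¹ • h₀ with hvdef
  have hLv : L v = 1 := by
    rw [hvdef, ContinuousLinearMap.map_smul, smul_eq_mul, inv_mul_cancel₀ hh₀]
  set Φ : Eu n → Eu n := fun q => q + (u q - L q) • v with hΦdef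
  set Φ' : Eu n → (Eu n →L[ℝ] Eu n) := fun q =>
    ContinuousLinearMap.id ℝ (Eu n) + (fderiv ℝ u q - L).smulRight v with hΦ'def
  have hudiff : ∀ q ∈ U, HasFDerivAt u (fderiv ℝ u q) q := fun q hq =>
    (((hu.contDiffAt (hU.mem_nhds hq)).differentiableAt one_ne_zero)).hasFDerivAt
  have hΦd : ∀ q ∈ U, HasFDerivAt Φ (Φ' q) q := by
    intro q hq
    have h1 : HasFDerivAt (fun q : Eu n => (u q - L q) • v)
        ((fderiv ℝ u q - L).smulRight v) q := by
      have := ((hudiff q hq).sub L.hasFDerivAt).smul (hasFDerivAt_const v q)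
      simp only [smul_zero, zero_add] at this; exact this
    exact (hasFDerivAt_id q).add h1
  have hLΦ : ∀ q, L (Φ q) = u q := by
    intro q
    simp only [hΦdef, map_add, ContinuousLinearMap.map_smul, hLv, smul_eq_mul]
    ring
  -- strict derivative at p
  have hΦ'p : Φ' p = ContinuousLinearMap.id ℝ (Eu n) := by
    have : fderiv ℝ u p - L = 0 := by rw [hLdef]; simp
    rw [hΦ'def]
    simp only [this]
    have hz : (0 : Eu n →L[ℝ] ℝ).smulRight v = 0 := by
      ext z
      simp
    rw [hz, add_zero]
  have hΦcd : ContDiffAt ℝ 1 Φ p := by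
    have : ContDiffOn ℝ 1 Φ U :=
      contDiffOn_id.add (((hu.sub (L.contDiff.contDiffOn)).smul contDiffOn_const))
    exact this.contDiffAt (hU.mem_nhds hp)
  have hstrict : HasStrictFDerivAt Φ
      ((ContinuousLinearEquiv.refl ℝ (Eu n) : Eu n ≃L[ℝ] Eu n) : Eu n →L[ℝ] Eu n) p := by
    have h := hΦcd.hasStrictFDerivAt one_ne_zero
    have : fderiv ℝ Φ p = Φ' p := (hΦd p hp).fderiv
    rw [this, hΦ'p] at h
    exact h
  set F := hstrict.toOpenPartialHomeomorph Φ with hFdef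
  have hpF : p ∈ F.source := hstrict.mem_toOpenPartialHomeomorph_source
  have hFcoe : (F : Eu n → Eu n) = Φ := hstrict.toOpenPartialHomeomorph_coe
  have hFinj : InjOn Φ F.source := by
    have := F.injOn
    rwa [hFcoe] at this
  -- continuity of the determinant
  have hdet_cont : ContinuousOn (fun q => (Φ' q).det) U := by
    have h1 : ContinuousOn (fun q => fderiv ℝ u q) U :=
      hu.continuousOn_fderiv_of_isOpen hU le_rfl
    have h2 : ContinuousOn (fun q => Φ' q) U := by
      have hc : Continuous (fun A : Eu n →L[ℝ] ℝ =>
          ContinuousLinearMap.id ℝ (Eu n) + (A - L).smulRight v) := by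
        have hflip := ((ContinuousLinearMap.smulRightL ℝ (Eu n) (Eu n)).flip v).continuous
        exact continuous_const.add (hflip.comp (continuous_id.sub continuous_const))
      exact hc.comp_continuousOn h1
    exact ContinuousLinearMap.continuous_det.comp_continuousOn h2
  have hdet_p : (Φ' p).det = 1 := by
    rw [hΦ'p]
    simp [ContinuousLinearMap.det]
  -- find a good ball
  have hWopen : IsOpen ((U ∩ (fun q => (Φ' q).det) ⁻¹' ({t : ℝ | 2⁻¹ < |t|})) ∩ F.source) := by
    apply IsOpen.inter _ F.open_source
    apply hdet_cont.isOpen_inter_preimage hU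
    have : {t : ℝ | 2⁻¹ < |t|} = abs ⁻¹' (Ioi (2⁻¹ : ℝ)) := rfl
    rw [this]
    exact isOpen_Ioi.preimage continuous_abs
  have hpW : p ∈ (U ∩ (fun q => (Φ' q).det) ⁻¹' ({t : ℝ | 2⁻¹ < |t|})) ∩ F.source := by
    refine ⟨⟨hp, ?_⟩, hpF⟩
    simp [hdet_p]
    norm_num
  obtain ⟨ρ₀, hρ₀pos, hρ₀⟩ := Metric.isOpen_iff.1 hWopen p hpW
  set ρ : ℝ := ρ₀ / 2 with hρdef
  have hρpos : 0 < ρ := by positivity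
  have hcb : Metric.closedBall p ρ ⊆ Metric.ball p ρ₀ := by
    apply Metric.closedBall_subset_ball
    linarith
  have hcbW : Metric.closedBall p ρ ⊆ (U ∩ (fun q => (Φ' q).det) ⁻¹' ({t : ℝ | 2⁻¹ < |t|})) ∩ F.source :=
    hcb.trans hρ₀
  have hballU : Metric.ball p ρ ⊆ U := fun q hq => (hcbW (Metric.ball_subset_closedBall hq)).1.1
  have hballF : Metric.ball p ρ ⊆ F.source := fun q hq => (hcbW (Metric.ball_subset_closedBall hq)).2
  -- bounded image
  have hcomp : IsCompact (Φ '' Metric.closedBall p ρ) := by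
    apply (isCompact_closedBall p ρ).image_of_continuousOn
    apply ContinuousOn.add continuousOn_id
    show ContinuousOn ((fun q => u q - L q) • fun _ : Eu n => v) _
    apply ContinuousOn.smul _ continuousOn_const
    exact ((hu.continuousOn.mono (hcb.trans (fun q hq => (hρ₀ hq).1.1))).sub
      (L.continuous.continuousOn))
  obtain ⟨R, hR⟩ := (Metric.isBounded_iff_subset_ball (Φ p)).1 hcomp.isBounded
  -- the constant
  refine ⟨Metric.ball p ρ, Metric.isOpen_ball, Metric.mem_ball_self hρpos, hballU,
    2 * ENNReal.ofReal (‖L‖⁻¹) * ENNReal.ofReal (2 * R) ^ (n - 1), by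
      apply ENNReal.mul_ne_top
      apply ENNReal.mul_ne_top (by simp) (by simp)
      exact ENNReal.pow_ne_top ENNReal.ofReal_ne_top, ?_⟩
  intro l r
  rcases le_or_gt r l with hrl | hlr
  · have : u ⁻¹' (Ioo l r) = ∅ := by
      rw [Set.Ioo_eq_empty (by linarith : ¬ l < r)]
      exact Set.preimage_empty
    rw [this, Set.inter_empty]
    simp
  -- main case
  set s : Set (Eu n) := Metric.ball p ρ ∩ u ⁻¹' (Ioo l r) with hsdef
  have hsU : s ⊆ U := fun q hq => hballU hq.1
  have hsopen : IsOpen s := by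
    have h1 : IsOpen (U ∩ u ⁻¹' (Ioo l r)) :=
      hu.continuousOn.isOpen_inter_preimage hU isOpen_Ioo
    have : s = Metric.ball p ρ ∩ (U ∩ u ⁻¹' (Ioo l r)) := by
      ext q
      constructor
      · rintro ⟨h1, h2⟩; exact ⟨h1, hballU h1, h2⟩
      · rintro ⟨h1, _, h3⟩; exact ⟨h1, h3⟩
    rw [this]
    exact Metric.isOpen_ball.inter h1
  have hsmeas : MeasurableSet s := hsopen.measurableSet
  have hf' : ∀ q ∈ s, HasFDerivWithinAt Φ (Φ' q) s q := fun q hq =>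
    (hΦd q (hsU hq)).hasFDerivWithinAt
  have hinj : InjOn Φ s := hFinj.mono (fun q hq => hballF hq.1)
  have himg : volume (Φ '' s) = ∫⁻ q in s, ENNReal.ofReal |(Φ' q).det| :=
    (lintegral_abs_det_fderiv_eq_addHaar_image volume hsmeas hf' hinj).symm
  have hlow : (2 : ℝ≥0∞)⁻¹ * volume s ≤ volume (Φ '' s) := by
    rw [himg, ← setLIntegral_const s (2⁻¹ : ℝ≥0∞)]
    apply setLIntegral_mono' hsmeas
    intro q hq
    have hdq : 2⁻¹ < |(Φ' q).det| := (hcbW (Metric.ball_subset_closedBall hq.1)).1.2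
    calc (2⁻¹ : ℝ≥0∞) = ENNReal.ofReal (2⁻¹ : ℝ) := by
          rw [ENNReal.ofReal_inv_of_pos (by norm_num)]
          norm_num
      _ ≤ ENNReal.ofReal |(Φ' q).det| := ENNReal.ofReal_le_ofReal hdq.le
  have himg_sub : Φ '' s ⊆ {z : Eu n | L z ∈ Ioo l r} ∩ Metric.ball (Φ p) R := by
    rintro z ⟨q, hq, rfl⟩
    constructor
    · rw [Set.mem_setOf_eq, hLΦ q]
      exact hq.2
    · apply hR
      exact ⟨q, Metric.ball_subset_closedBall hq.1, rfl⟩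
  have hslab := slab_volume hn L hL (Φ p) R l r
  have hupper : volume (Φ '' s) ≤
      ENNReal.ofReal ((r - l) / ‖L‖) * ENNReal.ofReal (2 * R) ^ (n - 1) :=
    le_trans (measure_mono himg_sub) hslab
  have hcomb : volume s ≤ 2 * (ENNReal.ofReal ((r - l) / ‖L‖) * ENNReal.ofReal (2 * R) ^ (n - 1)) := by
    have h2 := le_trans hlow hupper
    calc volume s = 2 * (2⁻¹ * volume s) := by
          rw [← mul_assoc, ENNReal.mul_inv_cancel (by norm_num) (by norm_num), one_mul]
      _ ≤ 2 * (ENNReal.ofReal ((r - l) / ‖L‖) * ENNReal.ofReal (2 * R) ^ (n - 1)) := by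
          exact mul_le_mul_right h2 2
  calc volume (Metric.ball p ρ ∩ u ⁻¹' (Ioo l r)) = volume s := rfl
    _ ≤ 2 * (ENNReal.ofReal ((r - l) / ‖L‖) * ENNReal.ofReal (2 * R) ^ (n - 1)) := hcomb
    _ = 2 * ENNReal.ofReal (‖L‖⁻¹) * ENNReal.ofReal (2 * R) ^ (n - 1) * ENNReal.ofReal (r - l) := by
        rw [div_eq_mul_inv, ENNReal.ofReal_mul' (by positivity)]
        ring

set_option maxHeartbeats 1000000 in
open ENNReal in
lemma piece_bound {n : ℕ} (hn : 1 ≤ n) {U : Set (Eu n)} (hU : IsOpen U)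
    (x : Eu n → Eu n) (hx : ContDiffOn ℝ 1 x U)
    {p : Eu n} (hp : p ∈ U) (hJp : fderiv ℝ x p ≠ 0)
    (a : ℝ) (ha : 0 < a) (k : ℕ) :
    ∃ V : Set (Eu n), IsOpen V ∧ p ∈ V ∧ V ⊆ U ∧ ∃ c : ℝ≥0∞, c ≠ ⊤ ∧
      ∀ ε ∈ Ioc (0:ℝ) 1, ∀ y : Eu n,
        (∫⁻ q in V, ENNReal.ofReal (‖y - x q‖^k * Real.exp (-a * ‖y - x q‖^2 / ε))) ≤
          c * ENNReal.ofReal (ε ^ (((k:ℝ)+1)/2)) := by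
  classical
  -- find a coordinate with nonzero derivative
  obtain ⟨h₀, hh₀⟩ : ∃ h₀, fderiv ℝ x p h₀ ≠ 0 := by
    by_contra hcon
    push_neg at hcon
    exact hJp (ContinuousLinearMap.ext fun z => by simp [hcon z])
  obtain ⟨i, hi⟩ : ∃ i : Fin n, fderiv ℝ x p h₀ i ≠ 0 := by
    by_contra hcon
    push_neg at hcon
    exact hh₀ (by ext i; exact hcon i)
  set u : Eu n → ℝ := ⇑(EuclideanSpace.proj (𝕜 := ℝ) i) ∘ x with hudef
  have hux : ∀ q, u q = x q i := fun _ => rfl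
  have hxdiff : DifferentiableAt ℝ x p :=
    (hx.contDiffAt (hU.mem_nhds hp)).differentiableAt one_ne_zero
  have huderiv : HasFDerivAt u ((EuclideanSpace.proj i).comp (fderiv ℝ x p)) p :=
    (EuclideanSpace.proj i).hasFDerivAt.comp p hxdiff.hasFDerivAt
  have hufd : fderiv ℝ u p ≠ 0 := by
    rw [huderiv.fderiv]
    intro hcon
    apply hi
    have := congrArg (fun A : Eu n →L[ℝ] ℝ => A h₀) hcon
    simpa using this
  have hucd : ContDiffOn ℝ 1 u U := (EuclideanSpace.proj i).contDiff.comp_contDiffOn hx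
  obtain ⟨V, hVopen, hpV, hVU, cV, hcV, hVbound⟩ := core_measure hn hU u hucd hp hufd
  -- constants
  set M : ℝ := Real.exp ((k:ℝ) ^ 2 / (4 * (a/2))) with hM
  have hMpos : 0 < M := Real.exp_pos _
  set Tb : ℝ≥0∞ := ENNReal.ofReal (1 + 2 / (a/2)) * (1 - ENNReal.ofReal (Real.exp (-(a/2/2))))⁻¹
    with hTb
  have hexplt : ENNReal.ofReal (Real.exp (-(a/2/2))) < 1 := by
    rw [ENNReal.ofReal_lt_one]
    exact Real.exp_lt_one_iff.2 (by linarith)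
  have hTbne : Tb ≠ ⊤ := by
    apply ENNReal.mul_ne_top (by simp)
    rw [ENNReal.inv_ne_top]
    intro hcon
    rw [tsub_eq_zero_iff_le] at hcon
    exact absurd hcon (not_le.2 hexplt)
  refine ⟨V, hVopen, hpV, hVU,
    ENNReal.ofReal (2 * M) * cV * Tb,
    ENNReal.mul_ne_top (ENNReal.mul_ne_top ENNReal.ofReal_ne_top hcV) hTbne, ?_⟩
  intro ε hε y
  obtain ⟨hε0, hε1⟩ := hε
  set sε : ℝ := Real.sqrt ε with hsε
  have hsεpos : 0 < sε := Real.sqrt_pos.2 hε0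
  set cc : ℝ := y i with hcc
  set b : ℝ := a / 2 with hb
  have hbpos : 0 < b := by positivity
  have hMb : M = Real.exp ((k:ℝ) ^ 2 / (4 * b)) := by rw [hM, hb]
  -- pointwise bound
  have hpoint : ∀ q : Eu n,
      ‖y - x q‖^k * Real.exp (-a * ‖y - x q‖^2 / ε) ≤
        (M * sε ^ k) * Real.exp (-b * (u q - cc)^2 / ε) := by
    intro q
    set t : ℝ := ‖y - x q‖ with ht
    have htnn : 0 ≤ t := norm_nonneg _
    have hst : |u q - cc| ≤ t := by
      rw [hux, hcc]
      have hcoord : (y - x q) i = y i - x q i := rfl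
      calc |x q i - y i| = |(y - x q) i| := by rw [hcoord, abs_sub_comm]
        _ ≤ ‖y - x q‖ := coord_le_norm _ _
    set τ : ℝ := t / sε with hτ
    have hτnn : 0 ≤ τ := by positivity
    have hεsq : sε ^ 2 = ε := Real.sq_sqrt hε0.le
    have hτsq : τ ^ 2 = t ^ 2 / ε := by rw [hτ, div_pow, hεsq]
    have htk : t ^ k = τ ^ k * sε ^ k := by
      rw [hτ, div_pow, div_mul_cancel₀]
      positivity
    have hsplit : Real.exp (-a * t^2 / ε) = Real.exp (-b * τ^2) * Real.exp (-b * t^2 / ε) := by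
      rw [← Real.exp_add, hτsq, hb]
      congr 1
      field_simp
      ring
    have haux := aux_pow_exp b hbpos k τ hτnn
    rw [← hMb] at haux
    calc t ^ k * Real.exp (-a * t^2/ε)
        = (τ ^ k * Real.exp (-b * τ^2)) * (sε ^ k * Real.exp (-b * t^2/ε)) := by
          rw [htk, hsplit]; ring
      _ ≤ M * (sε ^ k * Real.exp (-b * t^2/ε)) := by
          apply mul_le_mul_of_nonneg_right haux
          positivity
      _ ≤ (M * sε ^ k) * Real.exp (-b * (u q - cc)^2 / ε) := by
          rw [mul_assoc]
          apply mul_le_mul_of_nonneg_left _ hMpos.le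
          apply mul_le_mul_of_nonneg_left _ (by positivity)
          apply Real.exp_le_exp.2
          have hsq : (u q - cc)^2 ≤ t^2 := by
            rw [← sq_abs (u q - cc)]
            exact pow_le_pow_left₀ (abs_nonneg _) hst 2
          have h3 : -b * t^2 ≤ -b * (u q - cc)^2 := by nlinarith
          calc -b * t^2 / ε = (-b * t^2) * ε⁻¹ := by ring
            _ ≤ (-b * (u q - cc)^2) * ε⁻¹ := mul_le_mul_of_nonneg_right h3 (by positivity)
            _ = -b * (u q - cc)^2 / ε := by ring
  -- annuli decomposition
  set O : ℕ → Set (Eu n) := fun j =>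
    V ∩ u ⁻¹' (Ioo (cc - (j+1)*sε) (cc + (j+1)*sε)) with hO_def
  have hOopen : ∀ j, IsOpen (O j) := fun j =>
    (hucd.continuousOn.mono hVU).isOpen_inter_preimage hVopen isOpen_Ioo
  have hOvol : ∀ j : ℕ, volume (O j) ≤ cV * ENNReal.ofReal (2*((j:ℝ)+1)*sε) := by
    intro j
    calc volume (O j) ≤ cV * ENNReal.ofReal ((cc + (j+1)*sε) - (cc - (j+1)*sε)) :=
          hVbound _ _
      _ = cV * ENNReal.ofReal (2*((j:ℝ)+1)*sε) := by congr 1; ring_nf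
  have hpt2 : ∀ q ∈ V, ENNReal.ofReal (Real.exp (-b * (u q - cc)^2 / ε)) ≤
      ∑' j : ℕ, (O j).indicator (fun _ => ENNReal.ofReal (Real.exp (-b * (j:ℝ)^2))) q := by
    intro q hq
    set sv : ℝ := |u q - cc| with hsv
    have hsvnn : 0 ≤ sv := abs_nonneg _
    set j₀ : ℕ := ⌊sv / sε⌋₊ with hj₀
    have h1 : (j₀:ℝ) ≤ sv / sε := Nat.floor_le (by positivity)
    have h2 : sv / sε < j₀ + 1 := Nat.lt_floor_add_one _
    have hsv1 : (j₀:ℝ) * sε ≤ sv := by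
      rw [← le_div_iff₀ hsεpos]; exact h1
    have hsv2 : sv < ((j₀:ℝ) + 1) * sε := by
      rw [← div_lt_iff₀ hsεpos]; exact h2
    have hqO : q ∈ O j₀ := by
      refine ⟨hq, ?_⟩
      have habs := abs_lt.1 hsv2
      exact ⟨by linarith [habs.1], by linarith [habs.2]⟩
    have hval : ENNReal.ofReal (Real.exp (-b * (u q - cc)^2 / ε)) ≤
        (O j₀).indicator (fun _ => ENNReal.ofReal (Real.exp (-b * (j₀:ℝ)^2))) q := by
      rw [Set.indicator_of_mem hqO]
      apply ENNReal.ofReal_le_ofReal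
      apply Real.exp_le_exp.2
      have hεsq : sε ^ 2 = ε := Real.sq_sqrt hε0.le
      have hsq : (j₀:ℝ)^2 * ε ≤ (u q - cc)^2 := by
        have := mul_le_mul hsv1 hsv1 (by positivity) (by positivity)
        calc (j₀:ℝ)^2 * ε = ((j₀:ℝ) * sε) * ((j₀:ℝ) * sε) := by rw [← hεsq]; ring
          _ ≤ sv * sv := this
          _ = (u q - cc)^2 := by rw [hsv, ← sq_abs]; ring
      have h3 : -b * (u q - cc)^2 ≤ -b * ((j₀:ℝ)^2 * ε) := by nlinarith
      calc -b * (u q - cc)^2 / ε = (-b * (u q - cc)^2) * ε⁻¹ := by ring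
        _ ≤ (-b * ((j₀:ℝ)^2 * ε)) * ε⁻¹ := mul_le_mul_of_nonneg_right h3 (by positivity)
        _ = -b * (j₀:ℝ)^2 := by field_simp
    exact hval.trans (ENNReal.le_tsum j₀)
  have hgeom : ∀ j : ℕ, ENNReal.ofReal (((j:ℝ)+1) * Real.exp (-b * (j:ℝ)^2)) ≤
      ENNReal.ofReal (1 + 2/b) * ENNReal.ofReal (Real.exp (-(b/2))) ^ j := by
    intro j
    calc ENNReal.ofReal (((j:ℝ)+1) * Real.exp (-b * (j:ℝ)^2))
        ≤ ENNReal.ofReal ((1 + 2/b) * Real.exp (-(b/2)) ^ j) :=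
          ENNReal.ofReal_le_ofReal (aux_series b hbpos j)
      _ = ENNReal.ofReal (1 + 2/b) * ENNReal.ofReal (Real.exp (-(b/2))) ^ j := by
          rw [ENNReal.ofReal_mul (by positivity), ENNReal.ofReal_pow (Real.exp_nonneg _)]
  have hann : (∫⁻ q in V, ENNReal.ofReal (Real.exp (-b * (u q - cc)^2 / ε))) ≤
      (cV * ENNReal.ofReal (2*sε)) * Tb := by
    calc (∫⁻ q in V, ENNReal.ofReal (Real.exp (-b * (u q - cc)^2 / ε)))
        ≤ ∫⁻ q in V, ∑' j : ℕ,
            (O j).indicator (fun _ => ENNReal.ofReal (Real.exp (-b * (j:ℝ)^2))) q :=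
          setLIntegral_mono' hVopen.measurableSet hpt2
      _ = ∑' j : ℕ, ∫⁻ q in V,
            (O j).indicator (fun _ => ENNReal.ofReal (Real.exp (-b * (j:ℝ)^2))) q :=
          lintegral_tsum fun j =>
            (measurable_const.indicator (hOopen j).measurableSet).aemeasurable
      _ ≤ ∑' j : ℕ, ENNReal.ofReal (Real.exp (-b * (j:ℝ)^2)) *
            (cV * ENNReal.ofReal (2*((j:ℝ)+1)*sε)) := by
          apply ENNReal.tsum_le_tsum
          intro j
          rw [lintegral_indicator (hOopen j).measurableSet, setLIntegral_const,
            Measure.restrict_apply (hOopen j).measurableSet]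
          apply mul_le_mul_right
          exact le_trans (measure_mono inter_subset_left) (hOvol j)
      _ = ∑' j : ℕ, (cV * ENNReal.ofReal (2*sε)) *
            (ENNReal.ofReal (((j:ℝ)+1) * Real.exp (-b * (j:ℝ)^2))) := by
          apply tsum_congr
          intro j
          have h1 : ENNReal.ofReal (2*((j:ℝ)+1)*sε) =
              ENNReal.ofReal (2*sε) * ENNReal.ofReal ((j:ℝ)+1) := by
            rw [← ENNReal.ofReal_mul (by positivity : (0:ℝ) ≤ 2*sε)]
            congr 1
            ring
          have h2 : ENNReal.ofReal (((j:ℝ)+1) * Real.exp (-b*(j:ℝ)^2)) =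
              ENNReal.ofReal ((j:ℝ)+1) * ENNReal.ofReal (Real.exp (-b*(j:ℝ)^2)) :=
            ENNReal.ofReal_mul (by positivity)
          rw [h1, h2]
          ring
      _ ≤ ∑' j : ℕ, (cV * ENNReal.ofReal (2*sε)) *
            (ENNReal.ofReal (1 + 2/b) * ENNReal.ofReal (Real.exp (-(b/2))) ^ j) :=
          ENNReal.tsum_le_tsum fun j => mul_le_mul_right (hgeom j) _
      _ = (cV * ENNReal.ofReal (2*sε)) *
            (ENNReal.ofReal (1 + 2/b) * ∑' j : ℕ, ENNReal.ofReal (Real.exp (-(b/2))) ^ j) := by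
          rw [ENNReal.tsum_mul_left, ENNReal.tsum_mul_left]
      _ = (cV * ENNReal.ofReal (2*sε)) * Tb := by
          rw [ENNReal.tsum_geometric, hTb, hb]
  -- combine
  have hεpow : sε ^ k * sε = ε ^ (((k:ℝ)+1)/2) := by
    rw [hsε, Real.sqrt_eq_rpow, ← Real.rpow_natCast (ε ^ ((1:ℝ)/2)) k, ← Real.rpow_mul hε0.le,
      ← Real.rpow_add hε0]
    congr 1
    ring
  calc (∫⁻ q in V, ENNReal.ofReal (‖y - x q‖^k * Real.exp (-a * ‖y - x q‖^2 / ε)))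
      ≤ ∫⁻ q in V, ENNReal.ofReal (M * sε ^ k) *
          ENNReal.ofReal (Real.exp (-b * (u q - cc)^2 / ε)) := by
        apply lintegral_mono
        intro q
        dsimp only
        rw [← ENNReal.ofReal_mul (by positivity)]
        exact ENNReal.ofReal_le_ofReal (hpoint q)
    _ = ENNReal.ofReal (M * sε ^ k) *
          ∫⁻ q in V, ENNReal.ofReal (Real.exp (-b * (u q - cc)^2 / ε)) :=
        lintegral_const_mul' _ _ (by simp)
    _ ≤ ENNReal.ofReal (M * sε ^ k) * ((cV * ENNReal.ofReal (2*sε)) * Tb) :=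
        mul_le_mul_right hann _
    _ = (ENNReal.ofReal (M * sε ^ k) * ENNReal.ofReal (2*sε)) * (cV * Tb) := by ring
    _ = (ENNReal.ofReal (2 * M) * ENNReal.ofReal (sε ^ k * sε)) * (cV * Tb) := by
        rw [← ENNReal.ofReal_mul (by positivity), ← ENNReal.ofReal_mul (by positivity)]
        congr 1
        ring
    _ = ENNReal.ofReal (2 * M) * cV * Tb * ENNReal.ofReal (ε ^ (((k:ℝ)+1)/2)) := by
        rw [hεpow]
        ring

open ENNReal in
lemma lintegral_biUnion_le {α : Type*} [MeasurableSpace α] (μ : Measure α) (g : α → ℝ≥0∞)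
    {ι : Type*} [DecidableEq ι] (t : Finset ι) (s : ι → Set α) :
    (∫⁻ q in (⋃ i ∈ t, s i), g q ∂μ) ≤ ∑ i ∈ t, ∫⁻ q in s i, g q ∂μ := by
  induction t using Finset.induction_on with
  | empty => simp
  | insert a u hnotmem ih =>
    have hun : (⋃ i ∈ insert a u, s i) = s a ∪ ⋃ i ∈ u, s i := by
      simp [Set.biUnion_insert]
    rw [hun, Finset.sum_insert hnotmem]
    calc (∫⁻ q in s a ∪ ⋃ i ∈ u, s i, g q ∂μ)
        ≤ ∫⁻ q, g q ∂(μ.restrict (s a) + μ.restrict (⋃ i ∈ u, s i)) :=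
          lintegral_mono' (Measure.restrict_union_le _ _) le_rfl
      _ = (∫⁻ q in s a, g q ∂μ) + ∫⁻ q in (⋃ i ∈ u, s i), g q ∂μ := lintegral_add_measure _ _ _
      _ ≤ (∫⁻ q in s a, g q ∂μ) + ∑ i ∈ u, ∫⁻ q in s i, g q ∂μ := add_le_add_right ih _

open ENNReal in
theorem kernel_column_estimate
    {n : ℕ} (hn : 1 ≤ n)
    (K : Set (Eu n)) (hK : IsCompact K)
    (U : Set (Eu n)) (hU : IsOpen U) (hKU : K ⊆ U)
    (x : Eu n → Eu n) (hx : ContDiffOn ℝ 1 x U)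
    (hJ : ∀ x₀ ∈ K, fderiv ℝ x x₀ ≠ 0)
    (a : ℝ) (ha : 0 < a) (k : ℕ) :
    ∃ C : ℝ, ∀ ε ∈ Ioc (0:ℝ) 1, ∀ y : Eu n,
      (∫ x₀ in K, ‖y - x x₀‖^k * Real.exp (-a * ‖y - x x₀‖^2 / ε)) ≤
        C * ε ^ (((k:ℝ) + 1)/2) := by
  classical
  have hcover : ∀ p : Eu n, p ∈ K → ∃ V : Set (Eu n), IsOpen V ∧ p ∈ V ∧ V ⊆ U ∧
      ∃ c : ℝ≥0∞, c ≠ ⊤ ∧ ∀ ε ∈ Ioc (0:ℝ) 1, ∀ y : Eu n,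
        (∫⁻ q in V, ENNReal.ofReal (‖y - x q‖^k * Real.exp (-a * ‖y - x q‖^2 / ε))) ≤
          c * ENNReal.ofReal (ε ^ (((k:ℝ)+1)/2)) :=
    fun p hp => piece_bound hn hU x hx (hKU hp) (hJ p hp) a ha k
  choose! V hVopen hpV hVU c hc hbound using hcover
  obtain ⟨t, ht⟩ := hK.elim_finite_subcover (fun i : K => V ↑i)
    (fun i => hVopen ↑i i.2) (fun q hq => Set.mem_iUnion.2 ⟨⟨q, hq⟩, hpV q hq⟩)
  set Ctot : ℝ≥0∞ := ∑ i ∈ t, c ↑i with hCtot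
  have hCtot_ne : Ctot ≠ ⊤ := by
    rw [hCtot]
    exact ENNReal.sum_ne_top.2 (fun i _ => hc ↑i i.2)
  refine ⟨Ctot.toReal, ?_⟩
  intro ε hε y
  have hε0 : 0 < ε := hε.1
  have hεpow_nonneg : 0 ≤ ε ^ (((k:ℝ)+1)/2) := Real.rpow_nonneg hε0.le _
  set f : Eu n → ℝ := fun q => ‖y - x q‖^k * Real.exp (-a * ‖y - x q‖^2 / ε) with hf
  have hxc : ContinuousOn x K := hx.continuousOn.mono hKU
  have h1 : ContinuousOn (fun q => ‖y - x q‖) K := (continuousOn_const.sub hxc).norm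
  have hfc : ContinuousOn f K := by
    apply ContinuousOn.mul (h1.pow k)
    apply Real.continuous_exp.comp_continuousOn
    exact (continuousOn_const.mul (h1.pow 2)).div_const ε
  have hmeas : AEStronglyMeasurable f (volume.restrict K) :=
    hfc.aestronglyMeasurable hK.measurableSet
  have hnonneg : 0 ≤ᵐ[volume.restrict K] f := by
    apply Filter.Eventually.of_forall
    intro q
    positivity
  rw [MeasureTheory.integral_eq_lintegral_of_nonneg_ae hnonneg hmeas]
  have hlint : (∫⁻ q in K, ENNReal.ofReal (f q)) ≤
      Ctot * ENNReal.ofReal (ε ^ (((k:ℝ)+1)/2)) := by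
    calc (∫⁻ q in K, ENNReal.ofReal (f q))
        ≤ ∫⁻ q in (⋃ i ∈ t, V ↑i), ENNReal.ofReal (f q) :=
          lintegral_mono' (Measure.restrict_mono ht le_rfl) le_rfl
      _ ≤ ∑ i ∈ t, ∫⁻ q in V ↑i, ENNReal.ofReal (f q) :=
          lintegral_biUnion_le _ _ t _
      _ ≤ ∑ i ∈ t, (c ↑i) * ENNReal.ofReal (ε ^ (((k:ℝ)+1)/2)) := by
          apply Finset.sum_le_sum
          intro i _
          exact hbound ↑i i.2 ε hε y
      _ = Ctot * ENNReal.ofReal (ε ^ (((k:ℝ)+1)/2)) := by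
          rw [hCtot, Finset.sum_mul]
  calc (∫⁻ q in K, ENNReal.ofReal (f q)).toReal
      ≤ (Ctot * ENNReal.ofReal (ε ^ (((k:ℝ)+1)/2))).toReal := by
        apply ENNReal.toReal_mono _ hlint
        exact ENNReal.mul_ne_top hCtot_ne (by simp)
    _ = Ctot.toReal * ε ^ (((k:ℝ)+1)/2) := by
        rw [ENNReal.toReal_mul, ENNReal.toReal_ofReal hεpow_nonneg]
end
end

section
/- There exists a constant C such that for all ε ∈ (0,1], ‖ (β/(2πε))^{n/2} ∫_{I(0)} a(y,x₀) e^{−β|y−x₀|²/(2ε)} dx₀ ‖_{L²_y(ℝⁿ)} ≤ C (1 + ε^{−1/2}). -/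
/- STATEMENT 11:
Let I(0) ⊂ ℝⁿ be compact and, for each ε ∈ (0,1], let a : ℝⁿ × I(0) → ℂ be measurable with
|a(y,x₀)| ≤ C₀(1 + |y−x₀|/ε).  Then there is a constant C (independent of ε and a) with
‖ (β/(2πε))^{n/2} ∫_{I(0)} a(y,x₀) e^{−β|y−x₀|²/(2ε)} dx₀ ‖_{L²_y} ≤ C (1 + ε^{−1/2}). -/

noncomputable section

open MeasureTheory Set

/-- The L² norm on ℝⁿ (as an explicit integral). -/
def l2Norm {n : ℕ} (f : Eu n → ℂ) : ℝ := Real.sqrt (∫ x, ‖f x‖^2)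

/-- Elementary bound `u e^{-cu²} ≤ 1/√c`. -/
lemma aux_ueexp {c u : ℝ} (hc : 0 < c) (hu : 0 ≤ u) :
    u * Real.exp (-(c * u^2)) ≤ 1 / Real.sqrt c := by
  have h1 : (1 : ℝ) + c * u^2 ≤ Real.exp (c * u^2) := by
    have := Real.add_one_le_exp (c * u^2); linarith
  have hsc : 0 < Real.sqrt c := Real.sqrt_pos.2 hc
  have hsc2 : Real.sqrt c ^ 2 = c := Real.sq_sqrt hc.le
  have hpos : (0:ℝ) < 1 + c * u^2 := by positivity
  have h2 : u * Real.exp (-(c*u^2)) ≤ u / (1 + c*u^2) := by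
    rw [Real.exp_neg, div_eq_mul_inv]
    have hinv : (Real.exp (c*u^2))⁻¹ ≤ (1 + c*u^2)⁻¹ := by
      apply inv_anti₀ hpos h1
    exact mul_le_mul_of_nonneg_left hinv hu
  refine h2.trans ?_
  rw [div_le_div_iff₀ hpos hsc]
  nlinarith [sq_nonneg (1 - Real.sqrt c * u), sq_nonneg u]

/-- Integrability of the Gaussian on Euclidean space. -/
lemma integrable_gauss {n : ℕ} {c : ℝ} (hc : 0 < c) :
    Integrable (fun v : Eu n => Real.exp (-(c * ‖v‖^2))) := by
  have h := (GaussianFourier.integrable_cexp_neg_mul_sq_norm_add (V := Eu n) (b := (c:ℂ))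
      (by simpa using hc) 0 0).norm
  refine h.congr (Filter.Eventually.of_forall fun v => ?_)
  simp only [inner_zero_left, Complex.ofReal_zero, zero_mul, mul_zero, add_zero]
  rw [Complex.norm_exp]
  congr 1
  rw [← Complex.ofReal_pow, ← Complex.ofReal_neg, ← Complex.ofReal_mul, Complex.ofReal_re]
  ring

set_option maxHeartbeats 2000000 in
theorem gaussian_superposition_L2_bound
    {n : ℕ} (hn : 1 ≤ n) (β C₀ : ℝ) (hβ : 0 < β) (hC₀ : 0 < C₀)
    (I0 : Set (Eu n)) (hI0 : IsCompact I0) :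
    ∃ C : ℝ, ∀ ε ∈ Ioc (0:ℝ) 1, ∀ a : Eu n → Eu n → ℂ,
      Measurable (Function.uncurry a) →
      (∀ y : Eu n, ∀ x₀ ∈ I0, ‖a y x₀‖ ≤ C₀ * (1 + ‖y - x₀‖ / ε)) →
      l2Norm (fun y => (((β/(2*Real.pi*ε)) ^ ((n:ℝ)/2) : ℝ) : ℂ) *
          ∫ x₀ in I0, a y x₀ * ((Real.exp (-β * ‖y - x₀‖^2 / (2*ε)) : ℝ) : ℂ)) ≤
        C * (1 + ε ^ (-(1:ℝ)/2)) := by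
  classical
  obtain ⟨R₀, hR₀⟩ := hI0.isBounded.subset_closedBall 0
  set R : ℝ := max R₀ 0 with hRdef
  have hR : I0 ⊆ Metric.closedBall 0 R :=
    hR₀.trans (Metric.closedBall_subset_closedBall (le_max_left _ _))
  have hR0 : 0 ≤ R := le_max_right _ _
  have hπ := Real.pi_pos
  set M : ℝ := 1 / Real.sqrt (β/8) with hM
  have hM0 : 0 ≤ M := by positivity
  set V : ℝ := ∫ y : Eu n, Real.exp (-((β/4) * ‖y‖^2)) with hV
  have hV0 : 0 ≤ V := integral_nonneg fun y => (Real.exp_pos _).le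
  set A : ℝ := C₀ * 2^n * Real.exp (β*R^2/4) * (1+M) with hA
  have hA0 : 0 < A := by positivity
  refine ⟨A * Real.sqrt V, ?_⟩
  rintro ε ⟨hε0, hε1⟩ a hma hb
  set s : ℝ := ε ^ (-(1:ℝ)/2) with hsdef
  have hs0 : 0 ≤ s := Real.rpow_nonneg hε0.le _
  have hsqε : 0 < Real.sqrt ε := Real.sqrt_pos.2 hε0
  have hseq : s = (Real.sqrt ε)⁻¹ := by
    rw [hsdef, neg_div, Real.rpow_neg hε0.le, Real.sqrt_eq_rpow]
  set cε : ℝ := (β/(2*Real.pi*ε)) ^ ((n:ℝ)/2) with hcε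
  have hcε0 : 0 ≤ cε := Real.rpow_nonneg (by positivity) _
  set c : ℝ := β/(8*ε) with hc
  have hcpos : 0 < c := by positivity
  have hgauss : ∫ z : Eu n, Real.exp (-(c * ‖z‖^2)) = (Real.pi / c) ^ ((n:ℝ)/2) := by
    have h := GaussianFourier.integral_rexp_neg_mul_sq_norm (V := Eu n) hcpos
    simp only [neg_mul] at h ⊢
    rw [h, finrank_euclideanSpace_fin]
  have hprod : cε * (Real.pi/c)^((n:ℝ)/2) = 2^n := by
    rw [hcε, ← Real.mul_rpow (by positivity) (by positivity)]
    have h4eq : β/(2*Real.pi*ε) * (Real.pi/c) = 4 := by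
      rw [hc]; field_simp; ring
    rw [h4eq]
    have h4 : (4:ℝ) = (2:ℝ) ^ ((2:ℕ):ℝ) := by
      rw [Real.rpow_natCast]; norm_num
    rw [← Real.rpow_natCast (2:ℝ) n, h4, ← Real.rpow_mul (by norm_num : (0:ℝ) ≤ 2)]
    congr 1
    push_cast
    ring
  -- pointwise bound on the function
  have key : ∀ y : Eu n,
      ‖((cε : ℝ) : ℂ) * ∫ x₀ in I0, a y x₀ * ((Real.exp (-β * ‖y - x₀‖^2 / (2*ε)) : ℝ) : ℂ)‖
        ≤ A * (1+s) * Real.exp (-((β/8) * ‖y‖^2)) := by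
    intro y
    set D : ℝ := C₀ * (1 + M*s) * Real.exp (β*R^2/4) * Real.exp (-((β/8) * ‖y‖^2)) with hD
    have hD0 : 0 ≤ D := by positivity
    have hpt : ∀ x₀ ∈ I0,
        ‖a y x₀ * ((Real.exp (-β * ‖y - x₀‖^2 / (2*ε)) : ℝ) : ℂ)‖
          ≤ D * Real.exp (-(c * ‖y - x₀‖^2)) := by
      intro x₀ hx₀
      set r : ℝ := ‖y - x₀‖ with hrdef
      have hr0 : 0 ≤ r := norm_nonneg _
      have hyr : ‖y‖ ≤ r + R := by
        have hx : ‖x₀‖ ≤ R := by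
          have := hR hx₀
          simpa [Metric.mem_closedBall, dist_eq_norm] using this
        calc ‖y‖ = ‖(y - x₀) + x₀‖ := by rw [sub_add_cancel]
          _ ≤ ‖y - x₀‖ + ‖x₀‖ := norm_add_le _ _
          _ ≤ r + R := by rw [hrdef]; exact add_le_add le_rfl hx
      have hnorm : ‖a y x₀ * ((Real.exp (-β * r^2 / (2*ε)) : ℝ) : ℂ)‖
          = ‖a y x₀‖ * Real.exp (-β * r^2 / (2*ε)) := by
        rw [norm_mul, Complex.norm_real, Real.norm_eq_abs,
          abs_of_pos (Real.exp_pos _)]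
      rw [hnorm]
      have hsplit : Real.exp (-β * r^2 / (2*ε))
          = Real.exp (-(c*r^2)) * Real.exp (-(c*r^2)) * Real.exp (-(β*r^2/(4*ε))) := by
        rw [← Real.exp_add, ← Real.exp_add]
        congr 1
        rw [hc]
        field_simp
        ring
      have hE1 : Real.exp (-(β*r^2/(4*ε)))
          ≤ Real.exp (β*R^2/4) * Real.exp (-((β/8) * ‖y‖^2)) := by
        rw [← Real.exp_add]
        apply Real.exp_le_exp.2
        have h1 : β*r^2/4 ≤ β*r^2/(4*ε) := by
          apply div_le_div_of_nonneg_left (by positivity) (by positivity)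
          nlinarith
        have h2 : ‖y‖^2 ≤ 2*r^2 + 2*R^2 := by
          nlinarith [sq_nonneg (r - R), norm_nonneg y]
        nlinarith [mul_le_mul_of_nonneg_left h2 hβ.le]
      have hE2 : r/ε * Real.exp (-(c*r^2)) ≤ M * s := by
        set u : ℝ := r / Real.sqrt ε with hu
        have hε' : Real.sqrt ε * Real.sqrt ε = ε := Real.mul_self_sqrt hε0.le
        have hexp : (β/8) * u^2 = c * r^2 := by
          rw [hu, hc]
          field_simp
          rw [Real.sq_sqrt hε0.le]
        have hrε : r/ε = u * (Real.sqrt ε)⁻¹ := by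
          rw [hu]
          field_simp
          rw [Real.sq_sqrt hε0.le]
        have haux := aux_ueexp (c := β/8) (u := u) (by positivity) (by positivity)
        calc r/ε * Real.exp (-(c*r^2))
            = (u * Real.exp (-((β/8) * u^2))) * (Real.sqrt ε)⁻¹ := by
              rw [hrε, hexp]; ring
          _ ≤ (1 / Real.sqrt (β/8)) * (Real.sqrt ε)⁻¹ :=
              mul_le_mul_of_nonneg_right haux (by positivity)
          _ = M * s := by rw [hM, hseq]
      have hF : (1 + r/ε) * Real.exp (-(c*r^2)) ≤ 1 + M*s := by
        have e1 : Real.exp (-(c*r^2)) ≤ 1 := by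
          rw [← Real.exp_zero]
          apply Real.exp_le_exp.2
          nlinarith
        nlinarith [hE2, e1, Real.exp_pos (-(c*r^2))]
      have hE3 : ‖a y x₀‖ ≤ C₀ * (1 + r/ε) := hb y x₀ hx₀
      calc ‖a y x₀‖ * Real.exp (-β * r^2 / (2*ε))
          = ‖a y x₀‖ * (Real.exp (-(c*r^2)) * Real.exp (-(c*r^2)) * Real.exp (-(β*r^2/(4*ε)))) := by
            rw [hsplit]
        _ ≤ (C₀*(1+r/ε)) * (Real.exp (-(c*r^2)) * Real.exp (-(c*r^2)) * Real.exp (-(β*r^2/(4*ε)))) :=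
            mul_le_mul_of_nonneg_right hE3 (by positivity)
        _ = C₀ * (((1+r/ε) * Real.exp (-(c*r^2))) * Real.exp (-(β*r^2/(4*ε)))) * Real.exp (-(c*r^2)) := by
            ring
        _ ≤ C₀ * ((1+M*s) * (Real.exp (β*R^2/4) * Real.exp (-((β/8) * ‖y‖^2)))) * Real.exp (-(c*r^2)) := by
            apply mul_le_mul_of_nonneg_right _ (Real.exp_pos _).le
            apply mul_le_mul_of_nonneg_left _ hC₀.le
            exact mul_le_mul hF hE1 (Real.exp_pos _).le (by positivity)
        _ = D * Real.exp (-(c*r^2)) := by rw [hD]; ring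
    have hIg : Integrable (fun x₀ : Eu n => D * Real.exp (-(c * ‖y - x₀‖^2))) :=
      ((integrable_gauss hcpos).comp_sub_left y).const_mul D
    have hint1 : ‖∫ x₀ in I0, a y x₀ * ((Real.exp (-β * ‖y - x₀‖^2 / (2*ε)) : ℝ) : ℂ)‖
        ≤ ∫ x₀ in I0, D * Real.exp (-(c * ‖y - x₀‖^2)) := by
      refine (norm_integral_le_integral_norm _).trans ?_
      apply integral_mono_of_nonneg
      · exact Filter.Eventually.of_forall fun x₀ => norm_nonneg _
      · exact hIg.restrict
      · filter_upwards [ae_restrict_mem hI0.measurableSet] with x₀ hx₀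
        exact hpt x₀ hx₀
    have hint2 : ∫ x₀ in I0, D * Real.exp (-(c * ‖y - x₀‖^2)) ≤ D * (Real.pi/c)^((n:ℝ)/2) := by
      refine (setIntegral_le_integral hIg (Filter.Eventually.of_forall fun x₀ => by positivity)).trans ?_
      rw [integral_const_mul]
      have heq : ∫ x₀ : Eu n, Real.exp (-(c * ‖y - x₀‖^2))
          = ∫ z : Eu n, Real.exp (-(c * ‖z‖^2)) :=
        integral_sub_left_eq_self (fun z : Eu n => Real.exp (-(c * ‖z‖^2))) volume y
      rw [heq, hgauss]
    have hnrm : ‖((cε : ℝ) : ℂ) * ∫ x₀ in I0, a y x₀ * ((Real.exp (-β * ‖y - x₀‖^2 / (2*ε)) : ℝ) : ℂ)‖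
        = cε * ‖∫ x₀ in I0, a y x₀ * ((Real.exp (-β * ‖y - x₀‖^2 / (2*ε)) : ℝ) : ℂ)‖ := by
      rw [norm_mul, Complex.norm_real, Real.norm_eq_abs, abs_of_nonneg hcε0]
    rw [hnrm]
    calc cε * ‖∫ x₀ in I0, a y x₀ * ((Real.exp (-β * ‖y - x₀‖^2 / (2*ε)) : ℝ) : ℂ)‖
        ≤ cε * (D * (Real.pi/c)^((n:ℝ)/2)) :=
          mul_le_mul_of_nonneg_left (hint1.trans hint2) hcε0
      _ = D * (cε * (Real.pi/c)^((n:ℝ)/2)) := by ring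
      _ = D * 2^n := by rw [hprod]
      _ ≤ A * (1+s) * Real.exp (-((β/8) * ‖y‖^2)) := by
          rw [hD, hA]
          have h1 : (1 + M*s) ≤ (1+M)*(1+s) := by nlinarith
          calc C₀ * (1 + M*s) * Real.exp (β*R^2/4) * Real.exp (-((β/8) * ‖y‖^2)) * 2^n
              = (C₀ * 2^n * Real.exp (β*R^2/4) * Real.exp (-((β/8) * ‖y‖^2))) * (1+M*s) := by
                ring
            _ ≤ (C₀ * 2^n * Real.exp (β*R^2/4) * Real.exp (-((β/8) * ‖y‖^2))) * ((1+M)*(1+s)) :=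
                mul_le_mul_of_nonneg_left h1 (by positivity)
            _ = C₀ * 2^n * Real.exp (β*R^2/4) * (1+M) * (1+s) * Real.exp (-((β/8) * ‖y‖^2)) := by
                ring
  -- conclude
  have hInt2 : Integrable (fun y : Eu n => (A*(1+s))^2 * Real.exp (-((β/4) * ‖y‖^2))) :=
    (integrable_gauss (by positivity : (0:ℝ) < β/4)).const_mul _
  have h2 : (∫ y : Eu n, ‖((cε : ℝ) : ℂ) *
      ∫ x₀ in I0, a y x₀ * ((Real.exp (-β * ‖y - x₀‖^2 / (2*ε)) : ℝ) : ℂ)‖^2)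
      ≤ (A*(1+s))^2 * V := by
    refine (integral_mono_of_nonneg (Filter.Eventually.of_forall fun y => sq_nonneg _) hInt2
      (Filter.Eventually.of_forall fun y => ?_)).trans ?_
    · calc ‖((cε : ℝ) : ℂ) * ∫ x₀ in I0, a y x₀ * ((Real.exp (-β * ‖y - x₀‖^2 / (2*ε)) : ℝ) : ℂ)‖^2
          ≤ (A * (1+s) * Real.exp (-((β/8) * ‖y‖^2)))^2 :=
            pow_le_pow_left₀ (norm_nonneg _) (key y) 2
        _ = (A*(1+s))^2 * Real.exp (-((β/4) * ‖y‖^2)) := by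
            rw [mul_pow, pow_two (Real.exp _), ← Real.exp_add]
            congr 1
            ring
    · rw [integral_const_mul]
  have hAs : 0 ≤ A * (1+s) := by positivity
  calc l2Norm (fun y => (((β/(2*Real.pi*ε)) ^ ((n:ℝ)/2) : ℝ) : ℂ) *
        ∫ x₀ in I0, a y x₀ * ((Real.exp (-β * ‖y - x₀‖^2 / (2*ε)) : ℝ) : ℂ))
      = Real.sqrt (∫ y : Eu n, ‖((cε : ℝ) : ℂ) *
        ∫ x₀ in I0, a y x₀ * ((Real.exp (-β * ‖y - x₀‖^2 / (2*ε)) : ℝ) : ℂ)‖^2) := rfl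
    _ ≤ Real.sqrt ((A*(1+s))^2 * V) := Real.sqrt_le_sqrt h2
    _ = (A*(1+s)) * Real.sqrt V := by
        rw [Real.sqrt_mul (sq_nonneg _), Real.sqrt_sq hAs]
    _ = A * Real.sqrt V * (1 + s) := by ring
end
end

section
/- The solution M(t) of the matrix Riccati equation M'(t) + A(t) + B(t)M(t) + M(t)B(t)ᵀ + M(t)C(t)M(t) = 0, M(0) = M₀, exists for all t ∈ ℝ and satisfies: (i) M(t) is symmetric (M(t) = M(t)ᵀ) for all t, and (ii) the imaginary part Im M(t) is positive definite for all t. -/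
/- STATEMENT 14:
Let A, B, C : ℝ → ℝ^{n×n} be continuous with A(t), C(t) symmetric, and let M₀ be a complex
symmetric n×n matrix with Im M₀ positive definite.  Then the solution M(t) of
  M'(t) + A(t) + B(t)M(t) + M(t)B(t)ᵀ + M(t)C(t)M(t) = 0,  M(0) = M₀,
exists for all t ∈ ℝ, and M(t) is symmetric with Im M(t) positive definite for all t. -/

noncomputable section

open Matrix


noncomputable section

open Set Function

/-- Bound for interval integrals against a power bound. -/
theorem norm_intervalIntegral_le_pow {E : Type*} [NormedAddCommGroup E] [NormedSpace ℝ E]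
    {G : ℝ → E} (hG : Continuous G) {c : ℝ} (hc : 0 ≤ c) (m : ℕ) (t : ℝ)
    (hb : ∀ s ∈ uIcc (0:ℝ) t, ‖G s‖ ≤ c * |s| ^ m) :
    ‖∫ s in (0:ℝ)..t, G s‖ ≤ c * |t| ^ (m + 1) / (m + 1) := by
  rcases le_total 0 t with ht | ht
  · have habs : |t| = t := abs_of_nonneg ht
    calc ‖∫ s in (0:ℝ)..t, G s‖ ≤ ∫ s in (0:ℝ)..t, ‖G s‖ :=
          intervalIntegral.norm_integral_le_integral_norm ht
      _ ≤ ∫ s in (0:ℝ)..t, c * s ^ m := by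
          apply intervalIntegral.integral_mono_on ht
            (hG.norm.intervalIntegrable _ _)
            ((continuous_const.mul (continuous_pow m)).intervalIntegrable _ _)
          intro s hs
          have hs' : s ∈ uIcc (0:ℝ) t := by rw [uIcc_of_le ht]; exact hs
          have := hb s hs'
          rwa [abs_of_nonneg hs.1] at this
      _ = c * (t ^ (m+1) - 0 ^ (m+1)) / (m+1) := by
          rw [intervalIntegral.integral_const_mul, integral_pow]; ring
      _ = c * |t| ^ (m + 1) / (m + 1) := by rw [habs]; ring
  · have habs : |t| = -t := abs_of_nonpos ht
    rw [intervalIntegral.integral_symm, norm_neg]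
    calc ‖∫ s in t..(0:ℝ), G s‖ ≤ ∫ s in t..(0:ℝ), ‖G s‖ :=
          intervalIntegral.norm_integral_le_integral_norm ht
      _ ≤ ∫ s in t..(0:ℝ), c * (-s) ^ m := by
          apply intervalIntegral.integral_mono_on ht
            (hG.norm.intervalIntegrable _ _)
            ((continuous_const.mul ((continuous_neg).pow m)).intervalIntegrable _ _)
          intro s hs
          have hs' : s ∈ uIcc (0:ℝ) t := by rw [uIcc_of_ge ht]; exact hs
          have := hb s hs'
          rwa [abs_of_nonpos hs.2] at this
      _ = c * ((-t) ^ (m+1) - 0 ^ (m+1)) / (m+1) := by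
          rw [intervalIntegral.integral_const_mul]
          have : (∫ s in t..(0:ℝ), (-s) ^ m) = ∫ s in (-(0:ℝ))..(-t), s ^ m :=
            intervalIntegral.integral_comp_neg (fun s => s ^ m)
          rw [this]; rw [neg_zero, integral_pow]; ring
      _ = c * |t| ^ (m + 1) / (m + 1) := by rw [habs]; ring

/-- Solution of a linear ODE on a compact interval. -/
theorem linear_ODE_Icc {E : Type*} [NormedAddCommGroup E] [NormedSpace ℝ E] [CompleteSpace E]
    (L : ℝ → E →L[ℝ] E) (hL : Continuous L) (x₀ : E) (T : ℝ) (hT : 0 < T) :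
    ∃ f : ℝ → E, f 0 = x₀ ∧ ∀ t ∈ Icc (-T) T, HasDerivAt f (L t (f t)) t := by
  have hTT : -T ≤ T := by linarith
  obtain ⟨K0, hK0⟩ := (isCompact_Icc (a := -T) (b := T)).exists_bound_of_continuousOn
    hL.continuousOn
  set K := max K0 0 with hK
  have hKnn : 0 ≤ K := le_max_right _ _
  have hKb : ∀ s ∈ Icc (-T) T, ‖L s‖ ≤ K := fun s hs => (hK0 s hs).trans (le_max_left _ _)
  haveI : Nonempty (Icc (-T) T) := ⟨⟨0, by constructor <;> linarith⟩⟩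
  set π : ℝ → Icc (-T) T := fun s => projIcc (-T) T hTT s with hπ
  have hπcont : Continuous π := continuous_projIcc
  have hg : ∀ f : C(Icc (-T) T, E), Continuous fun s => L s (f (π s)) := fun f =>
    hL.clm_apply (f.continuous.comp hπcont)
  set Φ : C(Icc (-T) T, E) → C(Icc (-T) T, E) := fun f =>
    ⟨fun t => x₀ + ∫ s in (0:ℝ)..(t:ℝ), L s (f (π s)), by
      apply Continuous.add continuous_const
      exact (intervalIntegral.continuous_primitive
        (fun a b => ((hg f).intervalIntegrable a b)) 0).comp continuous_subtype_val⟩ with hΦ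
  have hΦapp : ∀ (f : C(Icc (-T) T, E)) (t : Icc (-T) T),
      Φ f t = x₀ + ∫ s in (0:ℝ)..(t:ℝ), L s (f (π s)) := fun f t => rfl
  have key : ∀ (m : ℕ) (f₁ f₂ : C(Icc (-T) T, E)) (t : Icc (-T) T),
      dist ((Φ^[m] f₁) t) ((Φ^[m] f₂) t) ≤ (K * |(t:ℝ)|) ^ m / m.factorial * dist f₁ f₂ := by
    intro m
    induction m with
    | zero => intro f₁ f₂ t; simpa using ContinuousMap.dist_apply_le_dist (f := f₁) (g := f₂) t
    | succ m ih =>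
      intro f₁ f₂ t
      rw [iterate_succ_apply', iterate_succ_apply']
      set h₁ := Φ^[m] f₁ with hh₁
      set h₂ := Φ^[m] f₂ with hh₂
      rw [hΦapp, hΦapp, dist_eq_norm]
      have hsub : x₀ + (∫ s in (0:ℝ)..(t:ℝ), L s (h₁ (π s))) -
          (x₀ + ∫ s in (0:ℝ)..(t:ℝ), L s (h₂ (π s))) =
          ∫ s in (0:ℝ)..(t:ℝ), (L s (h₁ (π s)) - L s (h₂ (π s))) := by
        rw [intervalIntegral.integral_sub ((hg h₁).intervalIntegrable _ _)
          ((hg h₂).intervalIntegrable _ _)]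
        abel
      rw [hsub]
      have hGb : ∀ s ∈ uIcc (0:ℝ) (t:ℝ), ‖L s (h₁ (π s)) - L s (h₂ (π s))‖ ≤
          (K ^ (m+1) / m.factorial * dist f₁ f₂) * |s| ^ m := by
        intro s hs
        have hsI : s ∈ Icc (-T) T := by
          have h0 : (0:ℝ) ∈ Icc (-T) T := ⟨by linarith, le_of_lt hT⟩
          have : uIcc (0:ℝ) (t:ℝ) ⊆ Icc (-T) T := uIcc_subset_Icc h0 t.2
          exact this hs
        have hπs : ((π s : Icc (-T) T) : ℝ) = s := congrArg Subtype.val (projIcc_of_mem hTT hsI)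
        have h1 : ‖L s (h₁ (π s)) - L s (h₂ (π s))‖ ≤ ‖L s‖ * ‖h₁ (π s) - h₂ (π s)‖ := by
          rw [← map_sub]; exact (L s).le_opNorm _
        have h2 : ‖h₁ (π s) - h₂ (π s)‖ ≤ (K * |s|) ^ m / m.factorial * dist f₁ f₂ := by
          rw [← dist_eq_norm]
          have := ih f₁ f₂ (π s)
          rwa [hπs] at this
        calc ‖L s (h₁ (π s)) - L s (h₂ (π s))‖ ≤ K * ((K * |s|) ^ m / m.factorial * dist f₁ f₂) := by
              refine h1.trans ?_
              have := mul_le_mul (hKb s hsI) h2 (norm_nonneg _) hKnn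
              exact this
          _ = (K ^ (m+1) / m.factorial * dist f₁ f₂) * |s| ^ m := by
              rw [mul_pow]; ring
      have hGc : Continuous fun s => L s (h₁ (π s)) - L s (h₂ (π s)) := (hg h₁).sub (hg h₂)
      have := norm_intervalIntegral_le_pow hGc
        (by positivity) m (t:ℝ) hGb
      refine this.trans ?_
      rw [mul_pow, Nat.factorial_succ]
      push_cast
      have hfac : (m.factorial : ℝ) ≠ 0 := Nat.cast_ne_zero.mpr m.factorial_ne_zero
      have hm1 : ((m:ℝ) + 1) ≠ 0 := by positivity
      apply le_of_eq
      field_simp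
  have hdist : ∀ (m : ℕ) (f₁ f₂ : C(Icc (-T) T, E)),
      dist (Φ^[m] f₁) (Φ^[m] f₂) ≤ (K * T) ^ m / m.factorial * dist f₁ f₂ := by
    intro m f₁ f₂
    rw [ContinuousMap.dist_le (by positivity)]
    intro t
    refine (key m f₁ f₂ t).trans ?_
    have htT : |(t:ℝ)| ≤ T := abs_le.mpr ⟨t.2.1, t.2.2⟩
    gcongr
  obtain ⟨m, hm⟩ := ((FloorSemiring.tendsto_pow_div_factorial_atTop (K * T)).eventually_lt_const
    one_pos).exists
  set q : ℝ := (K * T) ^ m / m.factorial with hq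
  have hq0 : 0 ≤ q := by positivity
  have hc : ContractingWith q.toNNReal (Φ^[m]) := by
    constructor
    · exact_mod_cast Real.toNNReal_lt_one.mpr hm
    · apply LipschitzWith.of_dist_le_mul
      intro f₁ f₂
      rw [Real.coe_toNNReal _ hq0]
      exact hdist m f₁ f₂
  set fc := hc.fixedPoint (Φ^[m]) with hfc
  have hfix : Φ fc = fc := hc.isFixedPt_fixedPoint_iterate
  set F : ℝ → E := fun t => x₀ + ∫ s in (0:ℝ)..t, L s (fc (π s)) with hF
  have hFI : ∀ t ∈ Icc (-T) T, F t = fc (π t) := by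
    intro t ht
    have hπt : ((π t : Icc (-T) T) : ℝ) = t := congrArg Subtype.val (projIcc_of_mem hTT ht)
    conv_rhs => rw [← hfix]
    rw [hΦapp, hπt]
  refine ⟨F, by simp [hF], ?_⟩
  intro t ht
  have hd : HasDerivAt F (L t (fc (π t))) t := by
    apply HasDerivAt.const_add
    exact intervalIntegral.integral_hasDerivAt_right ((hg fc).intervalIntegrable 0 t)
      ((hg fc).stronglyMeasurableAtFilter _ _) (hg fc).continuousAt
  rwa [← hFI t ht] at hd

/-- Global solution of a linear ODE. -/
theorem linear_ODE_global {E : Type*} [NormedAddCommGroup E] [NormedSpace ℝ E] [CompleteSpace E]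
    (L : ℝ → E →L[ℝ] E) (hL : Continuous L) (x₀ : E) :
    ∃ f : ℝ → E, f 0 = x₀ ∧ ∀ t, HasDerivAt f (L t (f t)) t := by
  choose F hF0 hFd using fun m : ℕ => linear_ODE_Icc L hL x₀ ((m : ℝ) + 1) (by positivity)
  have agree : ∀ (k l : ℕ) (s : ℝ), |s| ≤ (k : ℝ) + 1 → |s| ≤ (l : ℝ) + 1 → F k s = F l s := by
    intro k l s hk hl
    set c : ℝ := min ((k : ℝ) + 1) ((l : ℝ) + 1) with hcdef
    have hc : 0 < c := lt_min (by positivity) (by positivity)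
    have hcc : -c ≤ c := by linarith
    have hck : c ≤ (k : ℝ) + 1 := min_le_left _ _
    have hcl : c ≤ (l : ℝ) + 1 := min_le_right _ _
    obtain ⟨K0, hK0⟩ := (isCompact_Icc (a := -c) (b := c)).exists_bound_of_continuousOn
      hL.continuousOn
    set v : ℝ → E → E := fun t x => L ((projIcc (-c) c hcc t : Icc (-c) c) : ℝ) x with hv'
    have hv : ∀ t, LipschitzWith K0.toNNReal (v t) := by
      intro t
      apply (L _).lipschitz.weaken
      have h1 := hK0 _ (projIcc (-c) c hcc t).2
      simpa [← norm_toNNReal] using Real.toNNReal_mono h1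
    have hIk : Icc (-c) c ⊆ Icc (-((k:ℝ)+1)) ((k:ℝ)+1) := Icc_subset_Icc (by linarith) hck
    have hIl : Icc (-c) c ⊆ Icc (-((l:ℝ)+1)) ((l:ℝ)+1) := Icc_subset_Icc (by linarith) hcl
    have hd' : ∀ (j : ℕ), Icc (-c) c ⊆ Icc (-((j:ℝ)+1)) ((j:ℝ)+1) →
        ∀ t ∈ Ioo (-c) c, HasDerivAt (F j) (v t (F j t)) t := by
      intro j hI t ht
      have htI : t ∈ Icc (-c) c := Ioo_subset_Icc_self ht
      have hproj : ((projIcc (-c) c hcc t : Icc (-c) c) : ℝ) = t :=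
        congrArg Subtype.val (projIcc_of_mem hcc htI)
      have := hFd j t (hI htI)
      simpa [hv', hproj] using this
    have heq : EqOn (F k) (F l) (Icc (-c) c) := by
      apply ODE_solution_unique_of_mem_Icc (v := v) (s := fun _ => (univ : Set E))
        (fun t _ => (hv t).lipschitzOnWith) (⟨by linarith, hc⟩ : (0:ℝ) ∈ Ioo (-c) c)
        (fun t ht => ((hFd k t (hIk ht)).continuousAt).continuousWithinAt)
        (hd' k hIk) (fun _ _ => mem_univ _)
        (fun t ht => ((hFd l t (hIl ht)).continuousAt).continuousWithinAt)
        (hd' l hIl) (fun _ _ => mem_univ _)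
        ((hF0 k).trans (hF0 l).symm)
    exact heq (abs_le.mp (le_min hk hl))
  refine ⟨fun t => F ⌊|t|⌋₊ t, by simpa using hF0 ⌊|(0:ℝ)|⌋₊, ?_⟩
  intro t
  set m := ⌊|t|⌋₊ with hm
  have htm : |t| < (m : ℝ) + 1 := Nat.lt_floor_add_one _
  have heq : (fun s => F ⌊|s|⌋₊ s) =ᶠ[nhds t] F m := by
    have hopen : IsOpen {s : ℝ | |s| < (m : ℝ) + 1} := isOpen_lt continuous_abs continuous_const
    filter_upwards [hopen.mem_nhds htm] with s hs
    exact agree _ _ s (Nat.lt_floor_add_one _).le (le_of_lt hs)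
  have hd := hFd m t (abs_le.mp htm.le)
  exact hd.congr_of_eventuallyEq heq
open Set Function Matrix

noncomputable section

namespace RiccatiAux

variable {n : ℕ}

/-- state space: pairs of square arrays -/
abbrev ME (n : ℕ) := ((Fin n → Fin n → ℂ) × (Fin n → Fin n → ℂ))

/-- block linear map -/
def blkL (P Q R S : Matrix (Fin n) (Fin n) ℂ) : ME n →ₗ[ℝ] ME n where
  toFun z := (fun i j => (∑ k, P i k * z.1 k j) + ∑ k, Q i k * z.2 k j,
              fun i j => (∑ k, R i k * z.1 k j) + ∑ k, S i k * z.2 k j)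
  map_add' z w := by
    refine Prod.ext ?_ ?_ <;> funext i j <;>
      simp [Prod.fst_add, Prod.snd_add, mul_add, Finset.sum_add_distrib] <;> ring
  map_smul' c z := by
    refine Prod.ext ?_ ?_ <;> funext i j <;>
      simp only [Prod.smul_fst, Prod.smul_snd, Pi.smul_apply, Complex.real_smul,
        RingHom.id_apply] <;>
    · rw [mul_add]
      congr 1 <;> rw [Finset.mul_sum] <;> exact Finset.sum_congr rfl fun k _ => by ring

lemma blkL_fst (P Q R S : Matrix (Fin n) (Fin n) ℂ) (z : ME n) :
    Matrix.of ((blkL P Q R S z).1) = P * Matrix.of z.1 + Q * Matrix.of z.2 := by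
  ext i j; simp [blkL, Matrix.mul_apply, Matrix.add_apply]

lemma blkL_snd (P Q R S : Matrix (Fin n) (Fin n) ℂ) (z : ME n) :
    Matrix.of ((blkL P Q R S z).2) = R * Matrix.of z.1 + S * Matrix.of z.2 := by
  ext i j; simp [blkL, Matrix.mul_apply, Matrix.add_apply]

/-- continuous version -/
def blkCLM (P Q R S : Matrix (Fin n) (Fin n) ℂ) : ME n →L[ℝ] ME n :=
  (blkL P Q R S).toContinuousLinearMap

lemma blkCLM_apply (P Q R S : Matrix (Fin n) (Fin n) ℂ) (z : ME n) :
    blkCLM P Q R S z = blkL P Q R S z := rfl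

/-- the coefficient-to-operator map, as a linear map -/
def Psi (n : ℕ) : (ME n × ME n) →ₗ[ℝ] (ME n →L[ℝ] ME n) where
  toFun g := blkCLM (Matrix.of g.1.1) (Matrix.of g.1.2) (Matrix.of g.2.1) (Matrix.of g.2.2)
  map_add' g h := by
    refine ContinuousLinearMap.ext fun z => ?_
    simp only [ContinuousLinearMap.add_apply, blkCLM_apply]
    refine Prod.ext ?_ ?_ <;> funext i j <;>
      simp [blkL, Prod.fst_add, Prod.snd_add, Pi.add_apply, add_mul,
        Finset.sum_add_distrib, Matrix.of_apply] <;> ring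
  map_smul' c g := by
    refine ContinuousLinearMap.ext fun z => ?_
    simp only [ContinuousLinearMap.smul_apply, blkCLM_apply, RingHom.id_apply]
    refine Prod.ext ?_ ?_ <;> funext i j <;>
      simp only [blkL, Prod.smul_fst, Prod.smul_snd, Pi.smul_apply, Matrix.of_apply,
        LinearMap.coe_mk, AddHom.coe_mk, Complex.real_smul] <;>
    · rw [mul_add]
      congr 1 <;> rw [Finset.mul_sum] <;> exact Finset.sum_congr rfl fun k _ => by ring


section cont

lemma continuous_blkCLM {P Q R S : ℝ → Matrix (Fin n) (Fin n) ℂ}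
    (hP : Continuous P) (hQ : Continuous Q) (hR : Continuous R) (hS : Continuous S) :
    Continuous fun t => blkCLM (P t) (Q t) (R t) (S t) := by
  have h : (fun t => blkCLM (P t) (Q t) (R t) (S t)) =
      fun t => (Psi n).toContinuousLinearMap ((P t, Q t), (R t, S t)) := rfl
  rw [h]
  exact (Psi n).toContinuousLinearMap.continuous.comp
    (((hP.prodMk hQ)).prodMk ((hR.prodMk hS)))

end cont

/-- entrywise derivative of a matrix-valued function -/
def MHD (f f' : ℝ → Matrix (Fin n) (Fin n) ℂ) : Prop :=
  ∀ t i j, HasDerivAt (fun s => f s i j) (f' t i j) t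

namespace MHD

variable {f g f' g' : ℝ → Matrix (Fin n) (Fin n) ℂ}

theorem add (hf : MHD f f') (hg : MHD g g') :
    MHD (fun t => f t + g t) (fun t => f' t + g' t) := fun t i j => by
  exact (hf t i j).add (hg t i j)

theorem sub (hf : MHD f f') (hg : MHD g g') :
    MHD (fun t => f t - g t) (fun t => f' t - g' t) := fun t i j => by
  exact (hf t i j).sub (hg t i j)

theorem neg (hf : MHD f f') : MHD (fun t => -f t) (fun t => -f' t) := fun t i j => by
  exact (hf t i j).neg

theorem mul (hf : MHD f f') (hg : MHD g g') :
    MHD (fun t => f t * g t) (fun t => f' t * g t + f t * g' t) := fun t i j => by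
  have h := HasDerivAt.fun_sum (u := (Finset.univ : Finset (Fin n)))
    (A := fun k s => f s i k * g s k j)
    (A' := fun k => f' t i k * g t k j + f t i k * g' t k j)
    (fun k _ => (hf t i k).mul (hg t k j))
  have heq : (fun s => (f s * g s) i j) = fun s => ∑ k, f s i k * g s k j := by
    funext s; rw [Matrix.mul_apply]
  rw [heq]
  convert h using 1
  · rfl
  simp [Matrix.add_apply, Matrix.mul_apply, Finset.sum_add_distrib]

theorem transpose (hf : MHD f f') : MHD (fun t => (f t)ᵀ) (fun t => (f' t)ᵀ) := fun t i j =>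
  hf t j i

theorem conjTranspose (hf : MHD f f') : MHD (fun t => (f t)ᴴ) (fun t => (f' t)ᴴ) :=
  fun t i j => by
  simpa [Matrix.conjTranspose_apply] using (hf t j i).star

theorem const (N : Matrix (Fin n) (Fin n) ℂ) : MHD (fun _ => N) (fun _ => 0) := fun t i j => by
  simpa using hasDerivAt_const t (N i j)

theorem eq_const (hf : MHD f f') (h0 : ∀ t, f' t = 0) (t : ℝ) : f t = f 0 := by
  ext i j
  have hd : ∀ s, HasDerivAt (fun u => f u i j) 0 s := fun s => by
    simpa [h0 s] using hf s i j
  exact is_const_of_deriv_eq_zero (fun s => (hd s).differentiableAt)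
    (fun s => (hd s).deriv) t 0

end MHD

theorem diffAt_det {N : ℝ → Matrix (Fin n) (Fin n) ℂ} {t : ℝ}
    (h : ∀ i j, DifferentiableAt ℝ (fun s => N s i j) t) :
    DifferentiableAt ℝ (fun s => (N s).det) t := by
  have heq : (fun s => (N s).det) =
      fun s => ∑ σ : Equiv.Perm (Fin n), ((Equiv.Perm.sign σ : ℤ) : ℂ) * ∏ i, N s (σ i) i := by
    funext s; rw [Matrix.det_apply']
  rw [heq]
  refine DifferentiableAt.fun_sum fun σ _ => ?_
  refine DifferentiableAt.const_mul ?_ _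
  exact (HasDerivAt.fun_finsetProd fun i _ => (h (σ i) i).hasDerivAt).differentiableAt

theorem diffAt_adjugate {N : ℝ → Matrix (Fin n) (Fin n) ℂ} {t : ℝ}
    (h : ∀ i j, DifferentiableAt ℝ (fun s => N s i j) t) (i j : Fin n) :
    DifferentiableAt ℝ (fun s => (N s).adjugate i j) t := by
  have heq : (fun s => (N s).adjugate i j) =
      fun s => ((N s).updateRow j (Pi.single i 1)).det := by
    funext s; rw [Matrix.adjugate_apply]
  rw [heq]
  refine diffAt_det fun a b => ?_
  by_cases hab : a = j
  · simp only [Matrix.updateRow_apply, if_pos hab]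
    exact differentiableAt_const _
  · simp only [Matrix.updateRow_apply, if_neg hab]
    exact h a b

theorem diffAt_inv {N : ℝ → Matrix (Fin n) (Fin n) ℂ} {t : ℝ}
    (h : ∀ i j, DifferentiableAt ℝ (fun s => N s i j) t)
    (hdet : (N t).det ≠ 0) (i j : Fin n) :
    DifferentiableAt ℝ (fun s => (N s)⁻¹ i j) t := by
  have heq : (fun s => (N s)⁻¹ i j) = fun s => ((N s).det)⁻¹ * (N s).adjugate i j := by
    funext s
    rw [Matrix.inv_def, Matrix.smul_apply, Ring.inverse_eq_inv', smul_eq_mul]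
  rw [heq]
  exact ((diffAt_det h).inv hdet).mul (diffAt_adjugate h i j)

end RiccatiAux

namespace RiccatiAux

variable {n : ℕ}

open Complex

lemma re_quad (P : Matrix (Fin n) (Fin n) ℝ) (v : Fin n → ℂ) :
    (star v ⬝ᵥ ((P.map (Complex.ofReal)) *ᵥ v)).re =
      (fun i => (v i).re) ⬝ᵥ (P *ᵥ fun i => (v i).re) +
      (fun i => (v i).im) ⬝ᵥ (P *ᵥ fun i => (v i).im) := by
  simp only [dotProduct, mulVec, Pi.star_apply, Matrix.map_apply]
  rw [Complex.re_sum]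
  have h1 : ∀ i, (star (v i) * ∑ j, (P i j : ℂ) * v j).re
      = ∑ j, P i j * ((v i).re * (v j).re + (v i).im * (v j).im) := by
    intro i
    rw [Finset.mul_sum, Complex.re_sum]
    refine Finset.sum_congr rfl fun j _ => ?_
    simp only [RCLike.star_def, Complex.mul_re, Complex.mul_im, Complex.conj_re,
      Complex.conj_im, Complex.ofReal_re, Complex.ofReal_im]
    ring
  simp_rw [h1, mul_add, Finset.sum_add_distrib, Finset.mul_sum]
  congr 1 <;> exact Finset.sum_congr rfl fun i _ => Finset.sum_congr rfl fun j _ => by ring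

lemma re_quad_pos {P : Matrix (Fin n) (Fin n) ℝ} (hP : P.PosDef) {v : Fin n → ℂ} (hv : v ≠ 0) :
    0 < (star v ⬝ᵥ ((P.map (Complex.ofReal)) *ᵥ v)).re := by
  rw [re_quad]
  set a : Fin n → ℝ := fun i => (v i).re with ha
  set b : Fin n → ℝ := fun i => (v i).im with hb
  have hab : a ≠ 0 ∨ b ≠ 0 := by
    by_contra hcon
    push_neg at hcon
    apply hv
    funext i
    have h1 : a i = 0 := by rw [hcon.1]; rfl
    have h2 : b i = 0 := by rw [hcon.2]; rfl
    exact Complex.ext h1 h2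
  rcases hab with h | h
  · refine add_pos_of_pos_of_nonneg ?_ ?_
    · have := hP.dotProduct_mulVec_pos h; rwa [star_trivial] at this
    · have := hP.posSemidef.dotProduct_mulVec_nonneg b; rwa [star_trivial] at this
  · refine add_pos_of_nonneg_of_pos ?_ ?_
    · have := hP.posSemidef.dotProduct_mulVec_nonneg a; rwa [star_trivial] at this
    · have := hP.dotProduct_mulVec_pos h; rwa [star_trivial] at this

lemma dot_ofReal (P : Matrix (Fin n) (Fin n) ℝ) (x : Fin n → ℝ) :
    ((fun i => ((x i : ℂ))) ⬝ᵥ ((P.map (Complex.ofReal)) *ᵥ fun i => (x i : ℂ)))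
      = ((x ⬝ᵥ (P *ᵥ x) : ℝ) : ℂ) := by
  simp only [dotProduct, mulVec, Matrix.map_apply]
  push_cast
  ring

lemma sub_conjTranspose_eq {M : Matrix (Fin n) (Fin n) ℂ} (hsym : Mᵀ = M) :
    M - Mᴴ = (2 * Complex.I) • ((M.map Complex.im).map (Complex.ofReal)) := by
  ext i j
  have hji : M j i = M i j := by
    have h := congrFun (congrFun hsym i) j
    rwa [Matrix.transpose_apply] at h
  simp only [Matrix.sub_apply, Matrix.conjTranspose_apply, Matrix.smul_apply,
    Matrix.map_apply, hji, smul_eq_mul]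
  rw [RCLike.star_def, Complex.sub_conj]
  push_cast
  ring

lemma star_dot_conjTranspose_mulVec (A : Matrix (Fin n) (Fin n) ℂ) (v w : Fin n → ℂ) :
    star v ⬝ᵥ (Aᴴ *ᵥ w) = star (A *ᵥ v) ⬝ᵥ w := by
  rw [Matrix.dotProduct_mulVec, Matrix.star_mulVec]

end RiccatiAux

open RiccatiAux Complex

theorem riccati_global_solution
    {n : ℕ} (hn : 1 ≤ n)
    (A B C : ℝ → Matrix (Fin n) (Fin n) ℝ)
    (hA : Continuous A) (hB : Continuous B) (hC : Continuous C)
    (hAsymm : ∀ t, (A t)ᵀ = A t) (hCsymm : ∀ t, (C t)ᵀ = C t)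
    (M₀ : Matrix (Fin n) (Fin n) ℂ) (hM₀symm : M₀ᵀ = M₀)
    (hM₀pos : (M₀.map Complex.im).PosDef) :
    ∃ M : ℝ → Matrix (Fin n) (Fin n) ℂ,
      M 0 = M₀ ∧
      (∀ t : ℝ, ∀ i j, HasDerivAt (fun s => M s i j)
        (-(((A t).map Complex.ofReal) + ((B t).map Complex.ofReal) * M t +
            M t * ((B t).map Complex.ofReal)ᵀ +
            M t * ((C t).map Complex.ofReal) * M t) i j) t) ∧
      (∀ t : ℝ, (M t)ᵀ = M t) ∧
      (∀ t : ℝ, ((M t).map Complex.im).PosDef) := by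
  classical
  set Ac : ℝ → Matrix (Fin n) (Fin n) ℂ := fun t => (A t).map Complex.ofReal with hAcdef
  set Bc : ℝ → Matrix (Fin n) (Fin n) ℂ := fun t => (B t).map Complex.ofReal with hBcdef
  set Cc : ℝ → Matrix (Fin n) (Fin n) ℂ := fun t => (C t).map Complex.ofReal with hCcdef
  have hAcC : Continuous Ac := hA.matrix_map Complex.continuous_ofReal
  have hBcC : Continuous Bc := hB.matrix_map Complex.continuous_ofReal
  have hCcC : Continuous Cc := hC.matrix_map Complex.continuous_ofReal
  -- symmetry facts
  have hAcsymm : ∀ t, (Ac t)ᵀ = Ac t := fun t => by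
    rw [hAcdef, ← Matrix.transpose_map, hAsymm]
  have hCcsymm : ∀ t, (Cc t)ᵀ = Cc t := fun t => by
    rw [hCcdef, ← Matrix.transpose_map, hCsymm]
  have hmapH : ∀ (N : Matrix (Fin n) (Fin n) ℝ), (N.map Complex.ofReal)ᴴ = Nᵀ.map Complex.ofReal := by
    intro N; ext i j
    simp [Matrix.conjTranspose_apply, Matrix.map_apply, Complex.conj_ofReal]
  have hAcH : ∀ t, (Ac t)ᴴ = Ac t := fun t => by rw [hAcdef, hmapH, hAsymm]
  have hCcH : ∀ t, (Cc t)ᴴ = Cc t := fun t => by rw [hCcdef, hmapH, hCsymm]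
  have hBcH : ∀ t, (Bc t)ᴴ = (Bc t)ᵀ := fun t => by
    rw [hBcdef, hmapH, Matrix.transpose_map]
  have hBtcH : ∀ t, ((Bc t)ᵀ)ᴴ = Bc t := fun t => by
    show ((((B t).map Complex.ofReal))ᵀ)ᴴ = (B t).map Complex.ofReal
    rw [← Matrix.transpose_map, hmapH, Matrix.transpose_transpose]
  -- the linear field
  set L : ℝ → (ME n →L[ℝ] ME n) := fun t => blkCLM ((Bc t)ᵀ) (Cc t) (-(Ac t)) (-(Bc t)) with hLdef
  have hLC : Continuous L :=
    continuous_blkCLM hBcC.matrix_transpose hCcC hAcC.neg hBcC.neg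
  set x₀ : ME n := ((1 : Matrix (Fin n) (Fin n) ℂ), M₀) with hx₀def
  obtain ⟨Z, hZ0, hZd⟩ := linear_ODE_global L hLC x₀
  set X : ℝ → Matrix (Fin n) (Fin n) ℂ := fun t => Matrix.of (Z t).1 with hXdef
  set Y : ℝ → Matrix (Fin n) (Fin n) ℂ := fun t => Matrix.of (Z t).2 with hYdef
  have hX0 : X 0 = 1 := by show Matrix.of (Z 0).1 = 1; rw [hZ0, hx₀def]; rfl
  have hY0 : Y 0 = M₀ := by show Matrix.of (Z 0).2 = M₀; rw [hZ0, hx₀def]; rfl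
  -- entrywise derivatives
  have hXd : MHD X (fun t => (Bc t)ᵀ * X t + Cc t * Y t) := by
    intro t i j
    have h := ((ContinuousLinearMap.proj (R := ℝ) (φ := fun _ : Fin n => ℂ) j).comp
      ((ContinuousLinearMap.proj (R := ℝ) (φ := fun _ : Fin n => Fin n → ℂ) i).comp
        (ContinuousLinearMap.fst ℝ (Fin n → Fin n → ℂ) (Fin n → Fin n → ℂ)))).hasFDerivAt.comp_hasDerivAt t (hZd t)
    have hval : (L t (Z t)).1 i j = ((Bc t)ᵀ * X t + Cc t * Y t) i j := by
      have hb := blkL_fst ((Bc t)ᵀ) (Cc t) (-(Ac t)) (-(Bc t)) (Z t)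
      exact congrFun (congrFun hb i) j
    have h2 : HasDerivAt (fun s => X s i j) ((L t (Z t)).1 i j) t := h
    rwa [hval] at h2
  have hYd : MHD Y (fun t => -(Ac t) * X t + -(Bc t) * Y t) := by
    intro t i j
    have h := ((ContinuousLinearMap.proj (R := ℝ) (φ := fun _ : Fin n => ℂ) j).comp
      ((ContinuousLinearMap.proj (R := ℝ) (φ := fun _ : Fin n => Fin n → ℂ) i).comp
        (ContinuousLinearMap.snd ℝ (Fin n → Fin n → ℂ) (Fin n → Fin n → ℂ)))).hasFDerivAt.comp_hasDerivAt t (hZd t)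
    have hval : (L t (Z t)).2 i j = (-(Ac t) * X t + -(Bc t) * Y t) i j := by
      have hb := blkL_snd ((Bc t)ᵀ) (Cc t) (-(Ac t)) (-(Bc t)) (Z t)
      exact congrFun (congrFun hb i) j
    have h2 : HasDerivAt (fun s => Y s i j) ((L t (Z t)).2 i j) t := h
    rwa [hval] at h2
  -- conservation law: transpose symmetry
  have hGt : MHD (fun t => (X t)ᵀ * Y t - (Y t)ᵀ * X t)
      (fun t => (((Bc t)ᵀ * X t + Cc t * Y t)ᵀ * Y t + (X t)ᵀ * (-(Ac t) * X t + -(Bc t) * Y t)) -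
        ((-(Ac t) * X t + -(Bc t) * Y t)ᵀ * X t + (Y t)ᵀ * ((Bc t)ᵀ * X t + Cc t * Y t))) :=
    (hXd.transpose.mul hYd).sub (hYd.transpose.mul hXd)
  have hGt0 : ∀ t, (((Bc t)ᵀ * X t + Cc t * Y t)ᵀ * Y t + (X t)ᵀ * (-(Ac t) * X t + -(Bc t) * Y t)) -
        ((-(Ac t) * X t + -(Bc t) * Y t)ᵀ * X t + (Y t)ᵀ * ((Bc t)ᵀ * X t + Cc t * Y t)) = 0 := by
    intro t
    simp only [Matrix.transpose_add, Matrix.transpose_mul, Matrix.transpose_neg,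
      Matrix.transpose_transpose, hAcsymm t, hCcsymm t]
    noncomm_ring
  have hXYsym : ∀ t, (X t)ᵀ * Y t = (Y t)ᵀ * X t := by
    intro t
    have h := MHD.eq_const hGt hGt0 t
    rw [hX0, hY0] at h
    have h2 : (1 : Matrix (Fin n) (Fin n) ℂ)ᵀ * M₀ - M₀ᵀ * 1 = 0 := by
      rw [Matrix.transpose_one, one_mul, mul_one, hM₀symm, sub_self]
    rw [h2] at h
    exact sub_eq_zero.mp h
  -- conservation law: hermitian form
  have hGc : MHD (fun t => (X t)ᴴ * Y t - (Y t)ᴴ * X t)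
      (fun t => (((Bc t)ᵀ * X t + Cc t * Y t)ᴴ * Y t + (X t)ᴴ * (-(Ac t) * X t + -(Bc t) * Y t)) -
        ((-(Ac t) * X t + -(Bc t) * Y t)ᴴ * X t + (Y t)ᴴ * ((Bc t)ᵀ * X t + Cc t * Y t))) :=
    (hXd.conjTranspose.mul hYd).sub (hYd.conjTranspose.mul hXd)
  have hGc0 : ∀ t, (((Bc t)ᵀ * X t + Cc t * Y t)ᴴ * Y t + (X t)ᴴ * (-(Ac t) * X t + -(Bc t) * Y t)) -
        ((-(Ac t) * X t + -(Bc t) * Y t)ᴴ * X t + (Y t)ᴴ * ((Bc t)ᵀ * X t + Cc t * Y t)) = 0 := by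
    intro t
    simp only [Matrix.conjTranspose_add, Matrix.conjTranspose_mul, Matrix.conjTranspose_neg,
      hAcH t, hCcH t, hBcH t, hBtcH t]
    noncomm_ring
  have hGcconst : ∀ t, (X t)ᴴ * Y t - (Y t)ᴴ * X t = M₀ - M₀ᴴ := by
    intro t
    have h := MHD.eq_const hGc hGc0 t
    rw [hX0, hY0] at h
    rw [h, Matrix.conjTranspose_one, one_mul, mul_one]
  -- invertibility of X t
  have hXunit : ∀ t, IsUnit (X t).det := by
    intro t
    rw [isUnit_iff_ne_zero]
    intro hdet
    obtain ⟨v, hv0, hv⟩ := (Matrix.exists_mulVec_eq_zero_iff).mpr hdet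
    have h1 : star v ⬝ᵥ (((X t)ᴴ * Y t - (Y t)ᴴ * X t) *ᵥ v) = 0 := by
      rw [Matrix.sub_mulVec, dotProduct_sub, ← Matrix.mulVec_mulVec, ← Matrix.mulVec_mulVec,
        star_dot_conjTranspose_mulVec, star_dot_conjTranspose_mulVec, hv]
      simp
    rw [hGcconst t, sub_conjTranspose_eq hM₀symm, Matrix.smul_mulVec,
      dotProduct_smul, smul_eq_mul] at h1
    have h2I : (2 * Complex.I) ≠ 0 := mul_ne_zero two_ne_zero Complex.I_ne_zero
    have h2 : star v ⬝ᵥ (((M₀.map Complex.im).map Complex.ofReal) *ᵥ v) = 0 :=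
      (mul_eq_zero.mp h1).resolve_left h2I
    have h3 := re_quad_pos hM₀pos hv0
    rw [h2] at h3
    simp at h3
  -- the solution
  set M : ℝ → Matrix (Fin n) (Fin n) ℂ := fun t => Y t * (X t)⁻¹ with hMdef
  have hMX : ∀ t, M t * X t = Y t := by
    intro t
    show Y t * (X t)⁻¹ * X t = Y t
    rw [Matrix.nonsing_inv_mul_cancel_right _ _ (hXunit t)]
  have hM0 : M 0 = M₀ := by
    show Y 0 * (X 0)⁻¹ = M₀
    rw [hX0, hY0, inv_one, mul_one]
  -- symmetry
  have hMsym : ∀ t, (M t)ᵀ = M t := by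
    intro t
    have hdetT : IsUnit ((X t)ᵀ).det := by rw [Matrix.det_transpose]; exact hXunit t
    have k1 : (X t)ᵀ * (M t)ᵀ = (Y t)ᵀ := by
      show (X t)ᵀ * (Y t * (X t)⁻¹)ᵀ = (Y t)ᵀ
      rw [Matrix.transpose_mul, Matrix.transpose_nonsing_inv,
        Matrix.mul_nonsing_inv_cancel_left _ _ hdetT]
    have k2 : (X t)ᵀ * M t = (Y t)ᵀ := by
      show (X t)ᵀ * (Y t * (X t)⁻¹) = (Y t)ᵀ
      rw [← Matrix.mul_assoc, hXYsym t, Matrix.mul_nonsing_inv_cancel_right _ _ (hXunit t)]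
    calc (M t)ᵀ = ((X t)ᵀ)⁻¹ * ((X t)ᵀ * (M t)ᵀ) :=
          (Matrix.nonsing_inv_mul_cancel_left _ _ hdetT).symm
      _ = ((X t)ᵀ)⁻¹ * ((X t)ᵀ * M t) := by rw [k1, k2]
      _ = M t := Matrix.nonsing_inv_mul_cancel_left _ _ hdetT
  -- differentiability of M
  have hXe : ∀ t (a b : Fin n), DifferentiableAt ℝ (fun s => X s a b) t :=
    fun t a b => (hXd t a b).differentiableAt
  have hYe : ∀ t (a b : Fin n), DifferentiableAt ℝ (fun s => Y s a b) t :=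
    fun t a b => (hYd t a b).differentiableAt
  have hdiffM : ∀ t (i j : Fin n), DifferentiableAt ℝ (fun s => M s i j) t := by
    intro t i j
    have heq : (fun s => M s i j) = fun s => ∑ k, Y s i k * (X s)⁻¹ k j := by
      funext s
      show (Y s * (X s)⁻¹) i j = _
      rw [Matrix.mul_apply]
    rw [heq]
    exact DifferentiableAt.fun_sum fun k _ =>
      (hYe t i k).mul (diffAt_inv (hXe t) (hXunit t).ne_zero k j)
  set Md : ℝ → Matrix (Fin n) (Fin n) ℂ :=
    fun t => Matrix.of fun i j => deriv (fun s => M s i j) t with hMddef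
  have hMd : MHD M Md := fun t i j => (hdiffM t i j).hasDerivAt
  have hprod := hMd.mul hXd
  rw [show (fun t => M t * X t) = Y from funext hMX] at hprod
  have huniq : ∀ t, Md t * X t + M t * ((Bc t)ᵀ * X t + Cc t * Y t)
      = -(Ac t) * X t + -(Bc t) * Y t := by
    intro t
    ext i j
    exact HasDerivAt.unique (hprod t i j) (hYd t i j)
  have hMdeq : ∀ t, Md t = -(Ac t + Bc t * M t + M t * (Bc t)ᵀ + M t * Cc t * M t) := by
    intro t
    have h2 := huniq t
    rw [show Y t = M t * X t from (hMX t).symm] at h2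
    have h4 := eq_sub_of_add_eq h2
    have h1 : Md t * X t = -(Ac t + Bc t * M t + M t * (Bc t)ᵀ + M t * Cc t * M t) * X t := by
      rw [h4]; noncomm_ring
    calc Md t = Md t * X t * (X t)⁻¹ :=
          (Matrix.mul_nonsing_inv_cancel_right _ _ (hXunit t)).symm
      _ = -(Ac t + Bc t * M t + M t * (Bc t)ᵀ + M t * Cc t * M t) * X t * (X t)⁻¹ := by rw [h1]
      _ = -(Ac t + Bc t * M t + M t * (Bc t)ᵀ + M t * Cc t * M t) :=
          Matrix.mul_nonsing_inv_cancel_right _ _ (hXunit t)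
  refine ⟨M, hM0, ?_, hMsym, ?_⟩
  · intro t i j
    have h := hMd t i j
    rw [hMdeq t] at h
    exact h
  · intro t
    refine Matrix.PosDef.of_dotProduct_mulVec_pos ?_ ?_
    · -- hermitian
      ext i j
      have hij : M t j i = M t i j := by
        have h := congrFun (congrFun (hMsym t) i) j
        rwa [Matrix.transpose_apply] at h
      simp [Matrix.conjTranspose_apply, Matrix.map_apply, hij]
    · intro x hx
      set u : Fin n → ℂ := fun i => ((x i : ℝ) : ℂ) with hudef
      have hu0 : u ≠ 0 := by
        intro h
        apply hx
        funext i
        have h2 := congrFun h i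
        simpa [hudef] using h2
      set v : Fin n → ℂ := (X t)⁻¹ *ᵥ u with hvdef
      have hXv : X t *ᵥ v = u := by
        rw [hvdef, Matrix.mulVec_mulVec, Matrix.mul_nonsing_inv _ (hXunit t), Matrix.one_mulVec]
      have hv0 : v ≠ 0 := by
        intro h
        apply hu0
        rw [← hXv, h, Matrix.mulVec_zero]
      have hdetH : IsUnit ((X t)ᴴ).det := by
        rw [Matrix.det_conjTranspose]; exact (hXunit t).star
      have hid : (X t)ᴴ * (M t - (M t)ᴴ) * X t = M₀ - M₀ᴴ := by
        have hMH : (M t)ᴴ = ((X t)ᴴ)⁻¹ * (Y t)ᴴ := by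
          show (Y t * (X t)⁻¹)ᴴ = _
          rw [Matrix.conjTranspose_mul, Matrix.conjTranspose_nonsing_inv]
        rw [Matrix.mul_sub, Matrix.sub_mul, hMH,
          Matrix.mul_nonsing_inv_cancel_left _ _ hdetH]
        have h5 : (X t)ᴴ * M t * X t = (X t)ᴴ * Y t := by
          show (X t)ᴴ * (Y t * (X t)⁻¹) * X t = _
          rw [Matrix.mul_assoc ((X t)ᴴ), Matrix.nonsing_inv_mul_cancel_right _ _ (hXunit t)]
        rw [h5]
        exact hGcconst t
      have hq : star u ⬝ᵥ ((M t - (M t)ᴴ) *ᵥ u) = star v ⬝ᵥ ((M₀ - M₀ᴴ) *ᵥ v) := by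
        conv_lhs => rw [← hXv]
        rw [← star_dot_conjTranspose_mulVec (X t) v _, Matrix.mulVec_mulVec,
          Matrix.mulVec_mulVec, hid]
      have hstaru : star u = u := by
        funext i
        simp [hudef]
      rw [sub_conjTranspose_eq (hMsym t), sub_conjTranspose_eq hM₀symm,
        Matrix.smul_mulVec, Matrix.smul_mulVec, dotProduct_smul,
        dotProduct_smul, smul_eq_mul, smul_eq_mul] at hq
      have h2I : (2 * Complex.I) ≠ 0 := mul_ne_zero two_ne_zero Complex.I_ne_zero
      have hq2 := mul_left_cancel₀ h2I hq
      have hL : star u ⬝ᵥ (((M t).map Complex.im).map Complex.ofReal *ᵥ u)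
          = ((x ⬝ᵥ ((M t).map Complex.im) *ᵥ x : ℝ) : ℂ) := by
        rw [hstaru]
        exact dot_ofReal _ x
      rw [hL] at hq2
      have hfinal : (x ⬝ᵥ ((M t).map Complex.im) *ᵥ x : ℝ)
          = (star v ⬝ᵥ ((M₀.map Complex.im).map Complex.ofReal *ᵥ v)).re := by
        calc (x ⬝ᵥ ((M t).map Complex.im) *ᵥ x : ℝ)
            = (((x ⬝ᵥ ((M t).map Complex.im) *ᵥ x : ℝ)) : ℂ).re := (Complex.ofReal_re _).symm
          _ = _ := congrArg Complex.re hq2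
      have hsx : star x = x := funext fun i => star_trivial _
      rw [hsx, hfinal]
      exact re_quad_pos hM₀pos hv0
end
end
end
end
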